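/- arXiv:1909.11440 — 2 statements merged into one kernel-verified Lean document; each statement's English description precedes it below -/
import Mathlib

section
/- For each cycle C_n (n ≥ 3) with a leaf ℓ attached at a vertex v, the Morse complex M(C_n ∨_v ℓ) strongly collapses to a complex isomorphic to the Morse complex M(P_{n-1} ⊔ ℓ) of the disjoint union of the path on n vertices and an edge. -/
open Finset

/-- An abstract simplicial complex on vertex type `V`. -/
structure SComplex (V : Type*) where
  faces : Finset V → Prop
  not_empty : ¬ faces ∅
  down_closed : ∀ {σ τ : Finset V}, faces τ → σ ⊆ τ → σ.Nonempty → faces σ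

/-- The complex generated by a set of simplices (downward closure). -/
def ofGens {V : Type*} (gens : Set (Finset V)) : SComplex V where
  faces σ := σ.Nonempty ∧ ∃ τ ∈ gens, σ ⊆ τ
  not_empty h := by simpa using h.1
  down_closed := by
    rintro σ τ ⟨-, τ', hτ', hsub'⟩ hsub hne
    exact ⟨hne, τ', hτ', hsub.trans hsub'⟩

/-- A primitive (gradient) vector field on `K`: a single regular pair `(σ, τ)`
with `σ` a codimension-one face of `τ`. -/
structure VPair {V : Type*} (K : SComplex V) where
  lo : Finset V
  hi : Finset V
  lo_face : K.faces lo
  hi_face : K.faces hi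
  lo_sub : lo ⊆ hi
  card_eq : hi.card = lo.card + 1

noncomputable instance {V : Type*} (K : SComplex V) : DecidableEq (VPair K) :=
  Classical.decEq _

/-- Two primitive pairs share no simplex. -/
def VPair.Compatible {V : Type*} {K : SComplex V} (p q : VPair K) : Prop :=
  p.lo ≠ q.lo ∧ p.lo ≠ q.hi ∧ p.hi ≠ q.lo ∧ p.hi ≠ q.hi

/-- A discrete vector field: each simplex occurs in at most one pair. -/
def IsDVF {V : Type*} {K : SComplex V} (W : Set (VPair K)) : Prop :=
  ∀ p ∈ W, ∀ q ∈ W, p ≠ q → VPair.Compatible p q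

/-- Existence of a nontrivial closed `V`-path. -/
def HasClosedPath {V : Type*} {K : SComplex V} (W : Set (VPair K)) : Prop :=
  ∃ k : ℕ, 0 < k ∧ ∃ c : ZMod k → VPair K, (∀ i, c i ∈ W) ∧
    ∀ i, (c (i + 1)).lo ⊆ (c i).hi ∧ (c (i + 1)).lo ≠ (c i).lo ∧
      (c (i + 1)).lo.card + 1 = (c i).hi.card

/-- A gradient vector field: a discrete vector field with no nontrivial closed path. -/
def IsGVF {V : Type*} {K : SComplex V} (W : Set (VPair K)) : Prop :=
  IsDVF W ∧ ¬ HasClosedPath W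

/-- The Morse complex of `K`: vertices are primitive gradient vector fields,
simplices are gradient vector fields. -/
def MorseComplex {V : Type*} (K : SComplex V) : SComplex (VPair K) where
  faces S := S.Nonempty ∧ IsGVF {p | p ∈ S}
  not_empty h := by simpa using h.1
  down_closed := by
    rintro σ τ ⟨hne', hdvf, hnc⟩ hsub hne
    refine ⟨hne, fun p hp q hq hpq => hdvf p (hsub hp) q (hsub hq) hpq, fun h => hnc ?_⟩
    obtain ⟨k, hk, c, hc, hpath⟩ := h
    exact ⟨k, hk, c, fun i => hsub (hc i), hpath⟩

/-- The pure Morse complex: the subcomplex of `MorseComplex K` generated by the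
facets of maximum dimension (maximum gradient vector fields). -/
def pureMorse {V : Type*} (K : SComplex V) : SComplex (VPair K) where
  faces S := (MorseComplex K).faces S ∧ ∃ T : Finset (VPair K), S ⊆ T ∧
      (MorseComplex K).faces T ∧
      ∀ T' : Finset (VPair K), (MorseComplex K).faces T' → T'.card ≤ T.card
  not_empty h := (MorseComplex K).not_empty h.1
  down_closed := by
    rintro σ τ ⟨hτ, T, hsub', hT, hmax⟩ hsub hne
    exact ⟨(MorseComplex K).down_closed hτ hsub hne, T, hsub.trans hsub', hT, hmax⟩

/-- `σ` is a facet (maximal simplex) of `K`. -/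
def IsFacet {V : Type*} (K : SComplex V) (σ : Finset V) : Prop :=
  K.faces σ ∧ ∀ τ, K.faces τ → σ ⊆ τ → σ = τ

/-- `w` dominates `w'`: every facet containing `w'` contains `w`. -/
def Dominates {V : Type*} (K : SComplex V) (w w' : V) : Prop :=
  ∀ σ, IsFacet K σ → w' ∈ σ → w ∈ σ

/-- `K` is minimal: no vertex dominates another vertex. -/
def MinimalComplex {V : Type*} (K : SComplex V) : Prop :=
  ∀ w w' : V, K.faces {w} → K.faces {w'} → w ≠ w' → ¬ Dominates K w w'

/-- Strong collapsibility of a face predicate: a sequence of removals of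
dominated vertices reaching a single point. -/
inductive SCAux {V : Type*} : (Finset V → Prop) → Prop
  | point (F : Finset V → Prop) (v : V) (h : ∀ σ, F σ ↔ σ = {v}) : SCAux F
  | step (F : Finset V → Prop) (w w' : V) (hne : w ≠ w') (hw : F {w}) (hw' : F {w'})
      (hdom : ∀ σ, (F σ ∧ ∀ τ, F τ → σ ⊆ τ → σ = τ) → w' ∈ σ → w ∈ σ)
      (h : SCAux (fun σ => F σ ∧ w' ∉ σ)) : SCAux F

def StronglyCollapsible {V : Type*} (K : SComplex V) : Prop := SCAux K.faces

/-- `F` strongly collapses to `G` by a sequence of removals of dominated vertices. -/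
inductive SCTo {V : Type*} : (Finset V → Prop) → (Finset V → Prop) → Prop
  | refl (F : Finset V → Prop) : SCTo F F
  | step (F G : Finset V → Prop) (w w' : V) (hne : w ≠ w') (hw : F {w}) (hw' : F {w'})
      (hdom : ∀ σ, (F σ ∧ ∀ τ, F τ → σ ⊆ τ → σ = τ) → w' ∈ σ → w ∈ σ)
      (h : SCTo (fun σ => F σ ∧ w' ∉ σ) G) : SCTo F G

/-- Collapsibility (Forman): removal of free pairs down to a point. -/
inductive CollAux {V : Type*} : (Finset V → Prop) → Prop
  | point (F : Finset V → Prop) (v : V) (h : ∀ σ, F σ ↔ σ = {v}) : CollAux F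
  | step (F : Finset V → Prop) (σ τ : Finset V) (hστ : σ ⊂ τ) (hσ : F σ) (hτ : F τ)
      (hfree : ∀ ρ, F ρ → σ ⊂ ρ → ρ = τ)
      (h : CollAux (fun ρ => F ρ ∧ ρ ≠ σ ∧ ρ ≠ τ)) : CollAux F

def Collapsible {V : Type*} (K : SComplex V) : Prop := CollAux K.faces

/-- The degree of a vertex: the number of edges of `K` containing it. -/
noncomputable def sdeg {V : Type*} (K : SComplex V) (x : V) : ℕ :=
  Set.ncard {σ : Finset V | K.faces σ ∧ σ.card = 2 ∧ x ∈ σ}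

/-- Image of a finset, with a classical decidability instance. -/
noncomputable def fimage {V W : Type*} (f : V → W) (σ : Finset V) : Finset W :=
  haveI := Classical.decEq W
  σ.image f

/-- An isomorphism between two simplicial complexes given by face predicates. -/
structure ComplexIso {V W : Type*} (F : Finset V → Prop) (G : Finset W → Prop) where
  toFun : V → W
  invFun : W → V
  left_inv : ∀ x, F {x} → invFun (toFun x) = x
  right_inv : ∀ y, G {y} → toFun (invFun y) = y
  map_face : ∀ σ, F σ → G (fimage toFun σ)
  inv_face : ∀ τ, G τ → F (fimage invFun τ)

/-- The join of two simplicial complexes. -/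
def sJoin {V W : Type*} [DecidableEq V] [DecidableEq W] (K : SComplex V) (L : SComplex W) :
    SComplex (V ⊕ W) :=
  ofGens {σ | ∃ α β, (K.faces α ∨ α = ∅) ∧ (L.faces β ∨ β = ∅) ∧
    σ = α.image Sum.inl ∪ β.image Sum.inr}

/-- The disjoint union of two simplicial complexes. -/
def sDisjUnion {V W : Type*} [DecidableEq V] [DecidableEq W] (K : SComplex V) (L : SComplex W) :
    SComplex (V ⊕ W) :=
  ofGens ({σ | ∃ α, K.faces α ∧ σ = α.image Sum.inl} ∪
          {σ | ∃ β, L.faces β ∧ σ = β.image Sum.inr})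

/-- The simplicial complex of a simple graph (vertices and edges). -/
def graphComplex {V : Type*} [DecidableEq V] (G : SimpleGraph V) : SComplex V :=
  ofGens ({σ | ∃ x, σ = {x}} ∪ {σ | ∃ x y, G.Adj x y ∧ σ = ({x, y} : Finset V)})

/-- Attach a leaf (pendant edge) to `K` at the vertex `x`. -/
def attachLeaf {V : Type*} [DecidableEq V] (K : SComplex V) (x : V) : SComplex (V ⊕ Unit) :=
  ofGens ({σ | ∃ α, K.faces α ∧ σ = α.image Sum.inl} ∪
          {({Sum.inl x, Sum.inr ()} : Finset (V ⊕ Unit))})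

/-- The cycle graph on `ZMod n`. -/
def cycleGraph (n : ℕ) : SimpleGraph (ZMod n) :=
  SimpleGraph.fromRel (fun i j => j = i + 1)

/-- Attach one new leaf to every vertex of a graph. -/
def addLeaves {V : Type*} [DecidableEq V] (G : SimpleGraph V) : SComplex (V ⊕ V) :=
  ofGens ({σ | ∃ x y, G.Adj x y ∧ σ = ({Sum.inl x, Sum.inl y} : Finset (V ⊕ V))} ∪
          {σ | ∃ u, σ = ({Sum.inl u, Sum.inr u} : Finset (V ⊕ V))})

/-- The geometric realization of `K`, inside `V → ℝ`. -/
def realization {V : Type*} (K : SComplex V) : Set (V → ℝ) :=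
  {f | ∃ σ, K.faces σ ∧ (∀ x, 0 ≤ f x) ∧ (∀ x, f x ≠ 0 → x ∈ σ) ∧ ∑ x ∈ σ, f x = 1}

/-- A Hasse-diagram edge of a poset: a covering pair. -/
structure HEdge (P : Type*) [PartialOrder P] where
  lo : P
  hi : P
  cov : lo ⋖ hi

noncomputable instance {P : Type*} [PartialOrder P] : DecidableEq (HEdge P) :=
  Classical.decEq _

def HEdge.Compat {P : Type*} [PartialOrder P] (p q : HEdge P) : Prop :=
  p.lo ≠ q.lo ∧ p.lo ≠ q.hi ∧ p.hi ≠ q.lo ∧ p.hi ≠ q.hi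

def HasPosetCycle {P : Type*} [PartialOrder P] (W : Set (HEdge P)) : Prop :=
  ∃ k : ℕ, 0 < k ∧ ∃ c : ZMod k → HEdge P, (∀ i, c i ∈ W) ∧
    ∀ i, (c (i + 1)).lo ⋖ (c i).hi ∧ (c (i + 1)).lo ≠ (c i).lo

/-- The generalized Morse complex `f(P)` of a poset: simplices are acyclic
matchings of the Hasse diagram of `P`. -/
def genMorse (P : Type*) [PartialOrder P] : SComplex (HEdge P) where
  faces S := S.Nonempty ∧ (∀ p ∈ S, ∀ q ∈ S, p ≠ q → HEdge.Compat p q) ∧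
    ¬ HasPosetCycle {p | p ∈ S}
  not_empty h := by simpa using h.1
  down_closed := by
    rintro σ τ ⟨-, hm, hc⟩ hsub hne
    refine ⟨hne, fun p hp q hq h => hm p (hsub hp) q (hsub hq) h, fun h => hc ?_⟩
    obtain ⟨k, hk, c, hc', hp⟩ := h
    exact ⟨k, hk, c, fun i => hsub (hc' i), hp⟩

/-- The automorphism group of a simplicial complex, as a subgroup of `Perm V`. -/
def autGroup {V : Type*} [DecidableEq V] (K : SComplex V) : Subgroup (Equiv.Perm V) where
  carrier := {e | ∀ σ : Finset V, K.faces σ ↔ K.faces (σ.image e)}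
  one_mem' := by intro σ; simp
  mul_mem' := by
    intro a b ha hb σ
    rw [hb σ, ha (σ.image b)]
    simp [Finset.image_image, Equiv.Perm.coe_mul]
  inv_mem' := by
    intro a ha σ
    have := ha (σ.image ⇑a⁻¹)
    simpa [Finset.image_image, Function.comp_def, Equiv.apply_symm_apply,
      Finset.image_id'] using this.symm

/-- The full subcomplex of `K` on a set `S` of vertices. -/
def restrictTo {V : Type*} (K : SComplex V) (S : Set V) : Finset V → Prop :=
  fun σ => K.faces σ ∧ ∀ x ∈ σ, x ∈ S

/-- `S` spans a fully connected subcomplex: `K = (K∣S) * (K∣Sᶜ)`. -/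
def FullyConnected {V : Type*} [DecidableEq V] (K : SComplex V) (S : Set V) : Prop :=
  ∀ σ : Finset V, K.faces σ ↔ (σ.Nonempty ∧ ∃ α β : Finset V,
    (restrictTo K S α ∨ α = ∅) ∧ ((K.faces β ∧ ∀ x ∈ β, x ∉ S) ∨ β = ∅) ∧ σ = α ∪ β)

/-- The primitive pair `(x, xy)` on an edge `{x,y}`. -/
def edgePair {V : Type*} [DecidableEq V] (K : SComplex V) (x y : V) (hxy : x ≠ y)
    (h : K.faces {x, y}) : VPair K where
  lo := {x}
  hi := {x, y}
  lo_face := K.down_closed h (by simp) (Finset.singleton_nonempty x)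
  hi_face := h
  lo_sub := by simp
  card_eq := by
    rw [Finset.card_singleton, Finset.card_insert_of_notMem (by simp [hxy]),
      Finset.card_singleton]


/-! ### Auxiliary development -/

section Stmt11Aux

open Finset SimpleGraph

lemma fpair_eq {α : Type*} [DecidableEq α] {a b c d : α} :
    ({a,b} : Finset α) = {c,d} ↔ a = c ∧ b = d ∨ a = d ∧ b = c := by
  rw [← Finset.coe_inj]; push_cast; exact Set.pair_eq_pair_iff

lemma vpair_ext {V : Type*} {K : SComplex V} {p q : VPair K}
    (h1 : p.lo = q.lo) (h2 : p.hi = q.hi) : p = q := by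
  cases p; cases q; simp_all

lemma face_nonempty {V : Type*} {K : SComplex V} {σ : Finset V} (h : K.faces σ) :
    σ.Nonempty := by
  rcases σ.eq_empty_or_nonempty with h' | h'
  · exact absurd (h' ▸ h) K.not_empty
  · exact h'

lemma singleton_morse_face {V : Type*} {K : SComplex V} (p : VPair K) :
    (MorseComplex K).faces {p} := by
  refine ⟨⟨p, Finset.mem_singleton_self p⟩, ?_, ?_⟩
  · intro x hx y hy hxy
    simp only [Set.mem_setOf_eq, Finset.mem_singleton] at hx hy
    exact absurd (hx.trans hy.symm) hxy
  · rintro ⟨k, hk, c, hc, hp⟩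
    have h1 : c (0+1) = p := by
      have := hc (0+1); simpa using this
    have h0 : c 0 = p := by have := hc 0; simpa using this
    exact (hp 0).2.1 (by rw [h1, h0])

variable {n : ℕ}

/-- vertices and edges of the cycle-with-leaf complex -/
abbrev KV (n : ℕ) := ZMod n ⊕ Unit

def KK (n : ℕ) (v : ZMod n) : SComplex (KV n) := attachLeaf (graphComplex (cycleGraph n)) v

def leafE (n : ℕ) (v : ZMod n) : Finset (KV n) := {Sum.inl v, Sum.inr ()}

def cycE (t : ZMod n) : Finset (KV n) := {Sum.inl t, Sum.inl (t+1)}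

lemma K_face_iff (hn : 3 ≤ n) (v : ZMod n) (σ : Finset (KV n)) :
    (KK n v).faces σ ↔ σ.Nonempty ∧ (σ ⊆ leafE n v ∨ ∃ t : ZMod n, σ ⊆ cycE t) := by
  haveI : Fact (1 < n) := ⟨by omega⟩
  constructor
  · rintro ⟨hne, τ, hτ, hsub⟩
    refine ⟨hne, ?_⟩
    rcases hτ with ⟨α, hα, rfl⟩ | hτ
    · rcases hα with ⟨hαne, β, hβ, hαβ⟩
      rcases hβ with ⟨x, rfl⟩ | ⟨x, y, hxy, rfl⟩
      · right; exact ⟨x, hsub.trans (by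
          intro z hz
          simp only [Finset.mem_image] at hz
          obtain ⟨w, hw, rfl⟩ := hz
          have : w = x := by simpa using hαβ hw
          simp [cycE, this])⟩
      · rcases hxy with ⟨hne', h1 | h1⟩
        · right; refine ⟨x, hsub.trans ?_⟩
          intro z hz
          simp only [Finset.mem_image] at hz
          obtain ⟨w, hw, rfl⟩ := hz
          have hw' : w = x ∨ w = y := by simpa using hαβ hw
          rcases hw' with rfl | rfl
          · simp [cycE]
          · simp [cycE, h1]
        · right; refine ⟨y, hsub.trans ?_⟩
          intro z hz
          simp only [Finset.mem_image] at hz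
          obtain ⟨w, hw, rfl⟩ := hz
          have hw' : w = x ∨ w = y := by simpa using hαβ hw
          rcases hw' with rfl | rfl
          · simp [cycE, h1]
          · simp [cycE]
    · left
      simp only [Set.mem_singleton_iff] at hτ
      subst hτ; exact hsub
  · rintro ⟨hne, h | ⟨t, h⟩⟩
    · exact ⟨hne, leafE n v, Or.inr rfl, h⟩
    · refine ⟨hne, cycE t, Or.inl ⟨{t, t+1}, ?_, ?_⟩, h⟩
      · refine ⟨⟨t, by simp⟩, {t, t+1}, Or.inr ⟨t, t+1, ?_, rfl⟩, le_refl _⟩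
        exact ⟨(left_eq_add.not.mpr one_ne_zero), Or.inl rfl⟩
      · simp [cycE, Finset.image_insert]

lemma K_leafE_face (hn : 3 ≤ n) (v : ZMod n) : (KK n v).faces (leafE n v) :=
  (K_face_iff hn v _).2 ⟨⟨_, Finset.mem_insert_self _ _⟩, Or.inl (le_refl _)⟩

lemma K_cycE_face (hn : 3 ≤ n) (v : ZMod n) (t : ZMod n) : (KK n v).faces (cycE t) :=
  (K_face_iff hn v _).2 ⟨⟨_, Finset.mem_insert_self _ _⟩, Or.inr ⟨t, le_refl _⟩⟩

lemma inl_ne_inr {x : ZMod n} : (Sum.inl x : KV n) ≠ Sum.inr () := by simp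

lemma zmod_succ_ne (hn : 3 ≤ n) (t : ZMod n) : t ≠ t + 1 := by
  haveI : Fact (1 < n) := ⟨by omega⟩
  simp [left_eq_add]

/-- the four families of primitive pairs of `K` -/
noncomputable def aP (hn : 3 ≤ n) (v : ZMod n) : VPair (KK n v) :=
  edgePair _ (Sum.inl v) (Sum.inr ()) inl_ne_inr (K_leafE_face hn v)

noncomputable def bP (hn : 3 ≤ n) (v : ZMod n) : VPair (KK n v) :=
  edgePair _ (Sum.inr ()) (Sum.inl v) (Ne.symm inl_ne_inr) (by
    have := K_leafE_face hn v
    rwa [leafE, Finset.pair_comm] at this)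

noncomputable def bwdC (hn : 3 ≤ n) (v : ZMod n) (t : ZMod n) : VPair (KK n v) :=
  edgePair _ (Sum.inl t) (Sum.inl (t+1)) (by simp [zmod_succ_ne hn t]) (K_cycE_face hn v t)

noncomputable def fwdC (hn : 3 ≤ n) (v : ZMod n) (t : ZMod n) : VPair (KK n v) :=
  edgePair _ (Sum.inl (t+1)) (Sum.inl t) (by simp [(zmod_succ_ne hn t).symm]) (by
    have := K_cycE_face hn v t
    rwa [cycE, Finset.pair_comm] at this)

@[simp] lemma aP_lo (hn : 3 ≤ n) (v : ZMod n) : (aP hn v).lo = {Sum.inl v} := rfl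
@[simp] lemma aP_hi (hn : 3 ≤ n) (v : ZMod n) : (aP hn v).hi = leafE n v := rfl
@[simp] lemma bP_lo (hn : 3 ≤ n) (v : ZMod n) : (bP hn v).lo = {Sum.inr ()} := rfl
@[simp] lemma bP_hi (hn : 3 ≤ n) (v : ZMod n) : (bP hn v).hi = leafE n v := by
  show ({Sum.inr (), Sum.inl v} : Finset (KV n)) = _
  rw [Finset.pair_comm]; rfl
@[simp] lemma bwdC_lo (hn : 3 ≤ n) (v t : ZMod n) : (bwdC hn v t).lo = {Sum.inl t} := rfl
@[simp] lemma bwdC_hi (hn : 3 ≤ n) (v t : ZMod n) : (bwdC hn v t).hi = cycE t := rfl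
@[simp] lemma fwdC_lo (hn : 3 ≤ n) (v t : ZMod n) : (fwdC hn v t).lo = {Sum.inl (t+1)} := rfl
@[simp] lemma fwdC_hi (hn : 3 ≤ n) (v t : ZMod n) : (fwdC hn v t).hi = cycE t := by
  show ({Sum.inl (t+1), Sum.inl t} : Finset (KV n)) = _
  rw [Finset.pair_comm]; rfl

/-- classification of primitive pairs of `K` -/
lemma K_pair_classify (hn : 3 ≤ n) (v : ZMod n) (p : VPair (KK n v)) :
    p = aP hn v ∨ p = bP hn v ∨ ∃ t, p = bwdC hn v t ∨ p = fwdC hn v t := by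
  haveI : Fact (1 < n) := ⟨by omega⟩
  obtain ⟨hhne, hhi⟩ := (K_face_iff hn v _).1 p.hi_face
  have hlone := face_nonempty p.lo_face
  have hlocard : p.lo.card = 1 ∧ p.hi.card = 2 := by
    have h1 : 1 ≤ p.lo.card := Finset.card_pos.2 hlone
    have h2 : p.hi.card ≤ 2 := by
      rcases hhi with h | ⟨t, h⟩
      · exact le_trans (Finset.card_le_card h) (le_trans (Finset.card_insert_le _ _) (by simp))
      · exact le_trans (Finset.card_le_card h) (le_trans (Finset.card_insert_le _ _) (by simp))
    have := p.card_eq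
    omega
  obtain ⟨w, hw⟩ := Finset.card_eq_one.1 hlocard.1
  have hwhi : w ∈ p.hi := p.lo_sub (hw ▸ Finset.mem_singleton_self w)
  rcases hhi with h | ⟨t, h⟩
  · have hhi2 : p.hi = leafE n v := Finset.eq_of_subset_of_card_le h (by
      rw [hlocard.2]; exact Finset.card_le_two)
    rw [hhi2] at hwhi
    rcases Finset.mem_insert.1 hwhi with rfl | hw2
    · exact Or.inl (vpair_ext (by rw [hw]; rfl) (by rw [hhi2]; rfl))
    · right; left
      have : w = Sum.inr () := by simpa using hw2
      exact vpair_ext (by rw [hw, this]; rfl) (by rw [hhi2, bP_hi])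
  · have hcard2 : (cycE t : Finset (KV n)).card = 2 := by
      rw [cycE, Finset.card_insert_of_notMem (by simp [zmod_succ_ne hn t]), Finset.card_singleton]
    have hhi2 : p.hi = cycE t := Finset.eq_of_subset_of_card_le h (by rw [hlocard.2, hcard2])
    rw [hhi2] at hwhi
    right; right; refine ⟨t, ?_⟩
    rcases Finset.mem_insert.1 hwhi with rfl | hw2
    · exact Or.inl (vpair_ext (by rw [hw]; rfl) (by rw [hhi2]; rfl))
    · have : w = Sum.inl (t+1) := by simpa using hw2
      exact Or.inr (vpair_ext (by rw [hw, this]; rfl) (by rw [hhi2, fwdC_hi]))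

lemma zmod_two_ne_zero (hn : 3 ≤ n) : (2 : ZMod n) ≠ 0 := by
  intro h
  have h2 : ((2 : ℕ) : ZMod n) = 0 := by push_cast; exact h
  have := ZMod.val_cast_of_lt (show 2 < n by omega)
  rw [h2, ZMod.val_zero] at this
  omega

lemma cycE_inj (hn : 3 ≤ n) {t t' : ZMod n} (h : cycE t = cycE t') : t = t' := by
  rw [cycE, cycE, fpair_eq] at h
  rcases h with ⟨h1, -⟩ | ⟨h1, h2⟩
  · exact Sum.inl_injective h1
  · have e1 : t = t' + 1 := Sum.inl_injective h1
    have e2 : t + 1 = t' := Sum.inl_injective h2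
    exfalso
    apply zmod_two_ne_zero hn
    linear_combination e2 - e1

lemma leafE_ne_cycE (v t : ZMod n) : leafE n v ≠ cycE t := by
  intro h
  have : (Sum.inr () : KV n) ∈ cycE t := h ▸ (by simp [leafE])
  simp [cycE] at this

lemma mem_cycE {x t : ZMod n} : (Sum.inl x : KV n) ∈ cycE t ↔ x = t ∨ x = t + 1 := by
  simp [cycE]

lemma mem_leafE {x v : ZMod n} : (Sum.inl x : KV n) ∈ leafE n v ↔ x = v := by
  simp [leafE]

/-- `K` has no closed path avoiding the two distinguished pairs. -/
lemma K_no_closed_path (hn : 3 ≤ n) (v : ZMod n) (σ : Finset (VPair (KK n v)))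
    (hdvf : IsDVF {p | p ∈ σ}) (h1 : bwdC hn v v ∉ σ) (h2 : fwdC hn v (v-1) ∉ σ) :
    ¬ HasClosedPath {p | p ∈ σ} := by
  haveI : NeZero n := ⟨by omega⟩
  rintro ⟨k, hk, c, hc, hp⟩
  haveI : NeZero k := ⟨hk.ne'⟩
  simp only [Set.mem_setOf_eq] at hc
  have noA : ∀ i, c i ≠ aP hn v := by
    intro i hi
    have hstep := hp i
    rw [hi] at hstep
    rcases K_pair_classify hn v (c (i+1)) with hA | hB | ⟨t, hB | hF⟩
    · rw [hA] at hstep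
      exact hstep.2.1 rfl
    · have hne : bP hn v ≠ aP hn v := by
        intro h; have := congrArg VPair.lo h; simp at this
      have hcompat := hdvf _ (hB ▸ hc (i+1)) _ (hi ▸ hc i) hne
      exact hcompat.2.2.2 (by simp)
    · rw [hB] at hstep
      have hmem : (Sum.inl t : KV n) ∈ (aP hn v).hi :=
        hstep.1 (show (Sum.inl t : KV n) ∈ (bwdC hn v t).lo by simp)
      rw [aP_hi, mem_leafE] at hmem
      subst hmem
      exact h1 (hB ▸ hc (i+1))
    · rw [hF] at hstep
      have hmem : (Sum.inl (t+1) : KV n) ∈ (aP hn v).hi :=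
        hstep.1 (show (Sum.inl (t+1) : KV n) ∈ (fwdC hn v t).lo by simp)
      rw [aP_hi, mem_leafE] at hmem
      have ht : t = v - 1 := by linear_combination hmem
      subst ht
      exact h2 (hF ▸ hc (i+1))
  have noB : ∀ i, c i ≠ bP hn v := by
    intro i hi
    have hstep := hp (i - 1)
    rw [sub_add_cancel, hi] at hstep
    rcases K_pair_classify hn v (c (i-1)) with hA | hB | ⟨t, hB | hF⟩
    · exact noA _ hA
    · rw [hB] at hstep
      exact hstep.2.1 rfl
    · rw [hB] at hstep
      have hmem : (Sum.inr () : KV n) ∈ (bwdC hn v t).hi :=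
        hstep.1 (show (Sum.inr () : KV n) ∈ (bP hn v).lo by simp)
      simp [cycE] at hmem
    · rw [hF] at hstep
      have hmem : (Sum.inr () : KV n) ∈ (fwdC hn v t).hi :=
        hstep.1 (show (Sum.inr () : KV n) ∈ (bP hn v).lo by simp)
      rw [fwdC_hi] at hmem
      simp [cycE] at hmem
  have stepB : ∀ (i : ZMod k) (t : ZMod n), c i = bwdC hn v t → c (i+1) = bwdC hn v (t+1) := by
    intro i t hi
    have hstep := hp i
    rw [hi] at hstep
    rcases K_pair_classify hn v (c (i+1)) with hA | hB | ⟨s, hB | hF⟩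
    · exact absurd hA (noA _)
    · exact absurd hB (noB _)
    · rw [hB] at hstep
      have hmem : (Sum.inl s : KV n) ∈ (bwdC hn v t).hi :=
        hstep.1 (show (Sum.inl s : KV n) ∈ (bwdC hn v s).lo by simp)
      rw [bwdC_hi, mem_cycE] at hmem
      rcases hmem with rfl | rfl
      · exact (hstep.2.1 rfl).elim
      · exact hB
    · rw [hF] at hstep
      have hmem : (Sum.inl (s+1) : KV n) ∈ (bwdC hn v t).hi :=
        hstep.1 (show (Sum.inl (s+1) : KV n) ∈ (fwdC hn v s).lo by simp)
      rw [bwdC_hi, mem_cycE] at hmem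
      rcases hmem with h | h
      · exfalso
        apply hstep.2.1
        rw [fwdC_lo, bwdC_lo, h]
      · exfalso
        have hs : s = t := by linear_combination h
        subst hs
        have hne : c (i+1) ≠ c i := by
          rw [hi, hF]; intro hcon
          have hlo := congrArg VPair.lo hcon
          simp only [fwdC_lo, bwdC_lo, Finset.singleton_inj] at hlo
          exact (zmod_succ_ne hn s) ((Sum.inl_injective hlo).symm)
        have hcompat := hdvf _ (hc (i+1)) _ (hc i) hne
        apply hcompat.2.2.2
        rw [hi, hF, fwdC_hi, bwdC_hi]
  have stepF : ∀ (i : ZMod k) (t : ZMod n), c i = fwdC hn v t → c (i+1) = fwdC hn v (t-1) := by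
    intro i t hi
    have hstep := hp i
    rw [hi] at hstep
    rcases K_pair_classify hn v (c (i+1)) with hA | hB | ⟨s, hB | hF⟩
    · exact absurd hA (noA _)
    · exact absurd hB (noB _)
    · rw [hB] at hstep
      have hmem : (Sum.inl s : KV n) ∈ (fwdC hn v t).hi :=
        hstep.1 (show (Sum.inl s : KV n) ∈ (bwdC hn v s).lo by simp)
      rw [fwdC_hi, mem_cycE] at hmem
      rcases hmem with rfl | rfl
      · exfalso
        have hne : c (i+1) ≠ c i := by
          rw [hi, hB]; intro hcon
          have hlo := congrArg VPair.lo hcon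
          simp only [fwdC_lo, bwdC_lo, Finset.singleton_inj] at hlo
          exact (zmod_succ_ne hn s) (Sum.inl_injective hlo)
        have hcompat := hdvf _ (hc (i+1)) _ (hc i) hne
        apply hcompat.2.2.2
        rw [hi, hB, fwdC_hi, bwdC_hi]
      · exact (hstep.2.1 rfl).elim
    · rw [hF] at hstep
      have hmem : (Sum.inl (s+1) : KV n) ∈ (fwdC hn v t).hi :=
        hstep.1 (show (Sum.inl (s+1) : KV n) ∈ (fwdC hn v s).lo by simp)
      rw [fwdC_hi, mem_cycE] at hmem
      rcases hmem with h | h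
      · have hs : s = t - 1 := by linear_combination h
        subst hs; exact hF
      · exfalso
        apply hstep.2.1
        rw [fwdC_lo, fwdC_lo, h]
  rcases K_pair_classify hn v (c 0) with hA | hB | ⟨t0, hB | hF⟩
  · exact noA _ hA
  · exact noB _ hB
  · have key : ∀ m : ℕ, c (m : ZMod k) = bwdC hn v (t0 + m) := by
      intro m
      induction m with
      | zero => simpa using hB
      | succ m ih =>
        have hcast : ((m+1 : ℕ) : ZMod k) = (m : ZMod k) + 1 := by push_cast; ring
        rw [hcast, stepB _ _ ih]
        congr 1
        push_cast; ring
    have hkey := key (v - t0).val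
    have hval : (((v - t0).val : ℕ) : ZMod n) = v - t0 := by
      rw [ZMod.natCast_val, ZMod.cast_id]
    have harg : t0 + (((v - t0).val : ℕ) : ZMod n) = v := by rw [hval]; ring
    rw [harg] at hkey
    exact h1 (hkey ▸ hc _)
  · have key : ∀ m : ℕ, c (m : ZMod k) = fwdC hn v (t0 - m) := by
      intro m
      induction m with
      | zero => simpa using hF
      | succ m ih =>
        have hcast : ((m+1 : ℕ) : ZMod k) = (m : ZMod k) + 1 := by push_cast; ring
        rw [hcast, stepF _ _ ih]
        congr 1
        push_cast; ring
    have hkey := key (t0 - (v-1)).val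
    have hval : (((t0 - (v-1)).val : ℕ) : ZMod n) = t0 - (v-1) := by
      rw [ZMod.natCast_val, ZMod.cast_id]
    have harg : t0 - (((t0 - (v-1)).val : ℕ) : ZMod n) = v - 1 := by rw [hval]; ring
    rw [harg] at hkey
    exact h2 (hkey ▸ hc _)

lemma singleton_ne_of_not_mem {α : Type*} {x : α} {s : Finset α} (h : x ∉ s) :
    ({x} : Finset α) ≠ s := by
  intro he; exact h (he ▸ Finset.mem_singleton_self x)

lemma card_leafE (v : ZMod n) : (leafE n v).card = 2 := by
  rw [leafE, Finset.card_insert_of_notMem (by simp), Finset.card_singleton]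

lemma card_cycE (hn : 3 ≤ n) (t : ZMod n) : (cycE t : Finset (KV n)).card = 2 := by
  rw [cycE, Finset.card_insert_of_notMem (by simp [zmod_succ_ne hn t]), Finset.card_singleton]

lemma compat_symm {V : Type*} {K : SComplex V} {p q : VPair K}
    (h : VPair.Compatible p q) : VPair.Compatible q p :=
  ⟨h.1.symm, h.2.2.1.symm, h.2.1.symm, h.2.2.2.symm⟩

lemma compat_bP (hn : 3 ≤ n) (v : ZMod n) (q : VPair (KK n v))
    (hq : (∃ t, q = bwdC hn v t) ∨ (∃ t, q = fwdC hn v t)) :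
    VPair.Compatible (bP hn v) q := by
  have hcard : ∀ t : ZMod n, ({Sum.inr ()} : Finset (KV n)) ≠ cycE t := fun t =>
    singleton_ne_of_not_mem (by simp [cycE])
  have hcard2 : ∀ t : ZMod n, (leafE n v : Finset (KV n)) ≠ {Sum.inl t} := by
    intro t h
    have := congrArg Finset.card h
    rw [card_leafE, Finset.card_singleton] at this
    omega
  rcases hq with ⟨t, rfl⟩ | ⟨t, rfl⟩
  · exact ⟨by simp, by rw [bP_lo, bwdC_hi]; exact hcard t,
      by rw [bP_hi, bwdC_lo]; exact hcard2 t, by rw [bP_hi, bwdC_hi]; exact leafE_ne_cycE v t⟩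
  · exact ⟨by simp, by rw [bP_lo, fwdC_hi]; exact hcard t,
      by rw [bP_hi, fwdC_lo]; exact hcard2 (t+1), by rw [bP_hi, fwdC_hi]; exact leafE_ne_cycE v t⟩

lemma aP_ne_bP (hn : 3 ≤ n) (v : ZMod n) : aP hn v ≠ bP hn v := by
  intro h; have := congrArg VPair.lo h; simp at this

lemma bP_ne_bwdC (hn : 3 ≤ n) (v t : ZMod n) : bP hn v ≠ bwdC hn v t := by
  intro h; have := congrArg VPair.lo h; simp at this

lemma bP_ne_fwdC (hn : 3 ≤ n) (v t : ZMod n) : bP hn v ≠ fwdC hn v t := by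
  intro h; have := congrArg VPair.lo h; simp at this

lemma aP_ne_bwdC (hn : 3 ≤ n) (v t : ZMod n) : aP hn v ≠ bwdC hn v t := by
  intro h; have := congrArg VPair.hi h
  rw [aP_hi, bwdC_hi] at this
  exact leafE_ne_cycE v t this

lemma aP_ne_fwdC (hn : 3 ≤ n) (v t : ZMod n) : aP hn v ≠ fwdC hn v t := by
  intro h; have := congrArg VPair.hi h
  rw [aP_hi, fwdC_hi] at this
  exact leafE_ne_cycE v t this

/-- inserting `bP` into a face not containing `aP` yields a face -/
lemma insert_bP_face (hn : 3 ≤ n) (v : ZMod n) (σ : Finset (VPair (KK n v)))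
    (hσ : (MorseComplex (KK n v)).faces σ) (ha : aP hn v ∉ σ) :
    (MorseComplex (KK n v)).faces (insert (bP hn v) σ) := by
  obtain ⟨hne, hdvf, hnc⟩ := hσ
  refine ⟨⟨_, Finset.mem_insert_self _ _⟩, ?_, ?_⟩
  · intro p hp q hq hpq
    simp only [Set.mem_setOf_eq, Finset.mem_insert] at hp hq
    rcases hp with rfl | hp
    · rcases hq with rfl | hq
      · exact absurd rfl hpq
      · rcases K_pair_classify hn v q with hA | hB | ⟨t, hB | hF⟩
        · exact absurd (hA ▸ hq) ha
        · exact absurd hB.symm hpq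
        · exact compat_bP hn v q (Or.inl ⟨t, hB⟩)
        · exact compat_bP hn v q (Or.inr ⟨t, hF⟩)
    · rcases hq with rfl | hq
      · apply compat_symm
        rcases K_pair_classify hn v p with hA | hB | ⟨t, hB | hF⟩
        · exact absurd (hA ▸ hp) ha
        · exact absurd hB hpq
        · exact compat_bP hn v p (Or.inl ⟨t, hB⟩)
        · exact compat_bP hn v p (Or.inr ⟨t, hF⟩)
      · exact hdvf p hp q hq hpq
  · rintro ⟨k, hk, c, hc, hp⟩
    haveI : NeZero k := ⟨hk.ne'⟩
    simp only [Set.mem_setOf_eq, Finset.mem_insert] at hc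
    by_cases hball : ∀ i, c i ≠ bP hn v
    · apply hnc
      refine ⟨k, hk, c, ?_, hp⟩
      intro i
      rcases hc i with h | h
      · exact absurd h (hball i)
      · exact h
    · push_neg at hball
      obtain ⟨i0, hi0⟩ := hball
      have hstep := hp (i0 - 1)
      rw [sub_add_cancel, hi0] at hstep
      rcases K_pair_classify hn v (c (i0-1)) with hA | hB | ⟨t, hB | hF⟩
      · rcases hc (i0-1) with h | h
        · exact aP_ne_bP hn v (hA ▸ h)
        · exact ha (hA ▸ h)
      · rw [hB] at hstep
        exact hstep.2.1 rfl
      · rw [hB] at hstep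
        have hmem : (Sum.inr () : KV n) ∈ (bwdC hn v t).hi :=
          hstep.1 (show (Sum.inr () : KV n) ∈ (bP hn v).lo by simp)
        simp [cycE] at hmem
      · rw [hF] at hstep
        have hmem : (Sum.inr () : KV n) ∈ (fwdC hn v t).hi :=
          hstep.1 (show (Sum.inr () : KV n) ∈ (bP hn v).lo by simp)
        rw [fwdC_hi] at hmem
        simp [cycE] at hmem

lemma bwdC_ne_fwdC (hn : 3 ≤ n) (v t t' : ZMod n) : bwdC hn v t ≠ fwdC hn v t' := by
  intro h
  have hlo := congrArg VPair.lo h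
  have hhi := congrArg VPair.hi h
  rw [bwdC_lo, fwdC_lo, Finset.singleton_inj] at hlo
  rw [bwdC_hi, fwdC_hi] at hhi
  have h1 : t = t' + 1 := Sum.inl_injective hlo
  have h2 : t = t' := cycE_inj hn hhi
  rw [h2] at h1
  exact zmod_succ_ne hn t' h1

/-- The collapse: remove `bwdC v` and `fwdC (v-1)`, both dominated by `bP`. -/
lemma collapse (hn : 3 ≤ n) (v : ZMod n) :
    SCTo (MorseComplex (KK n v)).faces
      (fun σ => ((MorseComplex (KK n v)).faces σ ∧ bwdC hn v v ∉ σ) ∧ fwdC hn v (v-1) ∉ σ) := by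
  haveI : Fact (1 < n) := ⟨by omega⟩
  have hp1p2 : bwdC hn v v ≠ fwdC hn v (v-1) := bwdC_ne_fwdC hn v v (v-1)
  apply SCTo.step _ _ (bP hn v) (bwdC hn v v) (bP_ne_bwdC hn v v)
    (singleton_morse_face _) (singleton_morse_face _)
  · -- domination for the first step
    rintro σ ⟨hσ, hmax⟩ hw'
    by_cases hb : bP hn v ∈ σ
    · exact hb
    · exfalso
      have haP : aP hn v ∉ σ := by
        intro haσ
        have hcompat := hσ.2.1 _ haσ _ hw' (aP_ne_bwdC hn v v)
        apply hcompat.1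
        rw [aP_lo, bwdC_lo]
      have hface := insert_bP_face hn v σ hσ haP
      have := hmax _ hface (Finset.subset_insert _ _)
      exact hb (by rw [this]; exact Finset.mem_insert_self _ _)
  · apply SCTo.step _ _ (bP hn v) (fwdC hn v (v-1)) (bP_ne_fwdC hn v (v-1))
      ⟨singleton_morse_face _, by simpa using (bP_ne_bwdC hn v v).symm⟩
      ⟨singleton_morse_face _, by simpa using hp1p2⟩
    · rintro σ ⟨⟨hσ, hp1⟩, hmax⟩ hw'
      by_cases hb : bP hn v ∈ σ
      · exact hb
      · exfalso
        have haP : aP hn v ∉ σ := by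
          intro haσ
          have hcompat := hσ.2.1 _ haσ _ hw' (aP_ne_fwdC hn v (v-1))
          apply hcompat.1
          rw [aP_lo, fwdC_lo, sub_add_cancel]
        have hface := insert_bP_face hn v σ hσ haP
        have := hmax _ ⟨hface, by
          simp only [Finset.mem_insert, not_or]
          exact ⟨fun h => bP_ne_bwdC hn v v h.symm, hp1⟩⟩ (Finset.subset_insert _ _)
        exact hb (by rw [this]; exact Finset.mem_insert_self _ _)
    · exact SCTo.refl _

/-! ### The path-plus-edge side -/

abbrev LV (n : ℕ) := Fin n ⊕ Fin 2

def LL (n : ℕ) : SComplex (LV n) :=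
  sDisjUnion (graphComplex (SimpleGraph.pathGraph n)) (graphComplex (SimpleGraph.pathGraph 2))

def qF (hn : 3 ≤ n) (m : ℕ) : Fin n := ⟨min m (n-1), by omega⟩

lemma qF_val (hn : 3 ≤ n) {m : ℕ} (hm : m < n) : ((qF hn m : Fin n) : ℕ) = m := by
  simp [qF]; omega

lemma qF_inj (hn : 3 ≤ n) {m m' : ℕ} (hm : m < n) (hm' : m' < n) (h : qF hn m = qF hn m') :
    m = m' := by
  have := congrArg (fun x : Fin n => (x : ℕ)) h
  simpa [qF_val hn hm, qF_val hn hm'] using this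

def pathE (hn : 3 ≤ n) (m : ℕ) : Finset (LV n) := {Sum.inl (qF hn m), Sum.inl (qF hn (m+1))}

def ellE (n : ℕ) : Finset (LV n) := {Sum.inr 0, Sum.inr 1}

lemma inr_mem_ellE (z : Fin 2) : (Sum.inr z : LV n) ∈ ellE n := by
  fin_cases z <;> simp [ellE]

lemma L_face_iff (hn : 3 ≤ n) (σ : Finset (LV n)) :
    (LL n).faces σ ↔ σ.Nonempty ∧ ((∃ m : ℕ, m + 1 < n ∧ σ ⊆ pathE hn m) ∨ σ ⊆ ellE n) := by
  constructor
  · rintro ⟨hne, τ, hτ, hsub⟩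
    refine ⟨hne, ?_⟩
    rcases hτ with ⟨α, hα, rfl⟩ | ⟨β, hβ, rfl⟩
    · rcases hα with ⟨hαne, γ, hγ, hαγ⟩
      left
      rcases hγ with ⟨x, rfl⟩ | ⟨x, y, hxy, rfl⟩
      · -- singleton {x}
        refine ⟨min (x : ℕ) (n-2), by omega, hsub.trans ?_⟩
        intro z hz
        simp only [Finset.mem_image] at hz
        obtain ⟨w, hw, rfl⟩ := hz
        have hwx : w = x := by simpa using hαγ hw
        subst hwx
        simp only [pathE, Finset.mem_insert, Finset.mem_singleton]
        rcases le_or_gt (n-1) (w : ℕ) with h | h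
        · right
          exact congrArg Sum.inl (Fin.ext (by rw [qF_val hn (by omega)]; omega))
        · left
          exact congrArg Sum.inl (Fin.ext (by rw [qF_val hn (by omega)]; omega))
      · rcases (SimpleGraph.pathGraph_adj.1 hxy) with h | h
        · refine ⟨(x : ℕ), by omega, hsub.trans ?_⟩
          intro z hz
          simp only [Finset.mem_image] at hz
          obtain ⟨w, hw, rfl⟩ := hz
          have hw' : w = x ∨ w = y := by simpa using hαγ hw
          simp only [pathE, Finset.mem_insert, Finset.mem_singleton]
          rcases hw' with rfl | rfl
          · left
            exact congrArg Sum.inl (Fin.ext (by rw [qF_val hn w.isLt]))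
          · right
            exact congrArg Sum.inl (Fin.ext (by rw [qF_val hn (by omega)]; omega))
        · refine ⟨(y : ℕ), by omega, hsub.trans ?_⟩
          intro z hz
          simp only [Finset.mem_image] at hz
          obtain ⟨w, hw, rfl⟩ := hz
          have hw' : w = x ∨ w = y := by simpa using hαγ hw
          simp only [pathE, Finset.mem_insert, Finset.mem_singleton]
          rcases hw' with rfl | rfl
          · right
            exact congrArg Sum.inl (Fin.ext (by rw [qF_val hn (by omega)]; omega))
          · left
            exact congrArg Sum.inl (Fin.ext (by rw [qF_val hn w.isLt]))
    · right
      refine hsub.trans ?_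
      intro z hz
      simp only [Finset.mem_image] at hz
      obtain ⟨w, hw, rfl⟩ := hz
      exact inr_mem_ellE w
  · rintro ⟨hne, ⟨m, hm, h⟩ | h⟩
    · refine ⟨hne, pathE hn m, Or.inl ⟨{qF hn m, qF hn (m+1)}, ?_, ?_⟩, h⟩
      · refine ⟨⟨_, Finset.mem_insert_self _ _⟩, {qF hn m, qF hn (m+1)},
          Or.inr ⟨qF hn m, qF hn (m+1), ?_, rfl⟩, le_refl _⟩
        rw [SimpleGraph.pathGraph_adj]
        left
        rw [qF_val hn (by omega), qF_val hn (by omega)]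
      · simp [pathE, Finset.image_insert]
    · refine ⟨hne, ellE n, Or.inr ⟨{0, 1}, ?_, ?_⟩, h⟩
      · refine ⟨⟨0, Finset.mem_insert_self _ _⟩, {0, 1},
          Or.inr ⟨0, 1, ?_, rfl⟩, le_refl _⟩
        rw [SimpleGraph.pathGraph_adj]
        left; simp
      · simp [ellE, Finset.image_insert]

lemma L_ellE_face (hn : 3 ≤ n) : (LL n).faces (ellE n) :=
  (L_face_iff hn _).2 ⟨⟨_, Finset.mem_insert_self _ _⟩, Or.inr (le_refl _)⟩

lemma L_pathE_face (hn : 3 ≤ n) {m : ℕ} (hm : m + 1 < n) : (LL n).faces (pathE hn m) :=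
  (L_face_iff hn _).2 ⟨⟨_, Finset.mem_insert_self _ _⟩, Or.inl ⟨m, hm, le_refl _⟩⟩

lemma qF_succ_ne (hn : 3 ≤ n) {m : ℕ} (hm : m + 1 < n) : qF hn m ≠ qF hn (m+1) := by
  intro h
  have := qF_inj hn (by omega) (by omega) h
  omega

noncomputable def l0 (hn : 3 ≤ n) : VPair (LL n) :=
  edgePair _ (Sum.inr 0) (Sum.inr 1) (by simp) (L_ellE_face hn)

noncomputable def l1 (hn : 3 ≤ n) : VPair (LL n) :=
  edgePair _ (Sum.inr 1) (Sum.inr 0) (by simp [Fin.ext_iff]) (by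
    have := L_ellE_face hn
    rwa [ellE, Finset.pair_comm] at this)

noncomputable def bwdL (hn : 3 ≤ n) (m : ℕ) : VPair (LL n) :=
  if hm : m + 1 < n then
    edgePair _ (Sum.inl (qF hn m)) (Sum.inl (qF hn (m+1)))
      (by simp [qF_succ_ne hn hm]) (L_pathE_face hn hm)
  else l0 hn

noncomputable def fwdL (hn : 3 ≤ n) (m : ℕ) : VPair (LL n) :=
  if hm : m + 1 < n then
    edgePair _ (Sum.inl (qF hn (m+1))) (Sum.inl (qF hn m))
      (by simp [(qF_succ_ne hn hm).symm]) (by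
        have := L_pathE_face hn hm
        rwa [pathE, Finset.pair_comm] at this)
  else l1 hn

@[simp] lemma l0_lo (hn : 3 ≤ n) : (l0 hn (n := n)).lo = {Sum.inr 0} := rfl
@[simp] lemma l0_hi (hn : 3 ≤ n) : (l0 hn (n := n)).hi = ellE n := rfl
@[simp] lemma l1_lo (hn : 3 ≤ n) : (l1 hn (n := n)).lo = {Sum.inr 1} := rfl
@[simp] lemma l1_hi (hn : 3 ≤ n) : (l1 hn (n := n)).hi = ellE n := by
  show ({Sum.inr 1, Sum.inr 0} : Finset (LV n)) = _
  rw [Finset.pair_comm]; rfl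

lemma bwdL_lo (hn : 3 ≤ n) {m : ℕ} (hm : m + 1 < n) :
    (bwdL hn m).lo = {Sum.inl (qF hn m)} := by
  rw [bwdL, dif_pos hm]; rfl

lemma bwdL_hi (hn : 3 ≤ n) {m : ℕ} (hm : m + 1 < n) :
    (bwdL hn m).hi = pathE hn m := by
  rw [bwdL, dif_pos hm]; rfl

lemma fwdL_lo (hn : 3 ≤ n) {m : ℕ} (hm : m + 1 < n) :
    (fwdL hn m).lo = {Sum.inl (qF hn (m+1))} := by
  rw [fwdL, dif_pos hm]; rfl

lemma fwdL_hi (hn : 3 ≤ n) {m : ℕ} (hm : m + 1 < n) :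
    (fwdL hn m).hi = pathE hn m := by
  rw [fwdL, dif_pos hm]
  show ({Sum.inl (qF hn (m+1)), Sum.inl (qF hn m)} : Finset (LV n)) = _
  rw [Finset.pair_comm]; rfl

lemma card_ellE : (ellE n).card = 2 := by
  rw [ellE, Finset.card_insert_of_notMem (by simp [Fin.ext_iff]), Finset.card_singleton]

lemma card_pathE (hn : 3 ≤ n) {m : ℕ} (hm : m + 1 < n) : (pathE hn m).card = 2 := by
  rw [pathE, Finset.card_insert_of_notMem (by simp [qF_succ_ne hn hm]), Finset.card_singleton]

lemma ellE_ne_pathE (hn : 3 ≤ n) (m : ℕ) : ellE n ≠ pathE hn m := by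
  intro h
  have : (Sum.inr 0 : LV n) ∈ pathE hn m := h ▸ (by simp [ellE])
  simp [pathE] at this

lemma pathE_inj (hn : 3 ≤ n) {m m' : ℕ} (hm : m + 1 < n) (hm' : m' + 1 < n)
    (h : pathE hn m = pathE hn m') : m = m' := by
  rw [pathE, pathE, fpair_eq] at h
  rcases h with ⟨h1, -⟩ | ⟨h1, h2⟩
  · exact qF_inj hn (by omega) (by omega) (Sum.inl_injective h1)
  · have e1 := qF_inj hn (by omega) (by omega) (Sum.inl_injective h1)
    have e2 := qF_inj hn (by omega) (by omega) (Sum.inl_injective h2)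
    omega

/-- classification of primitive pairs of `L` -/
lemma L_pair_classify (hn : 3 ≤ n) (p : VPair (LL n)) :
    p = l0 hn ∨ p = l1 hn ∨ ∃ m, m + 1 < n ∧ (p = bwdL hn m ∨ p = fwdL hn m) := by
  obtain ⟨hhne, hhi⟩ := (L_face_iff hn _).1 p.hi_face
  have hlone := face_nonempty p.lo_face
  have hlocard : p.lo.card = 1 ∧ p.hi.card = 2 := by
    have h1 : 1 ≤ p.lo.card := Finset.card_pos.2 hlone
    have h2 : p.hi.card ≤ 2 := by
      rcases hhi with ⟨m, hm, h⟩ | h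
      · exact le_trans (Finset.card_le_card h) (le_of_eq (card_pathE hn hm))
      · exact le_trans (Finset.card_le_card h) (le_of_eq card_ellE)
    have := p.card_eq
    omega
  obtain ⟨w, hw⟩ := Finset.card_eq_one.1 hlocard.1
  have hwhi : w ∈ p.hi := p.lo_sub (hw ▸ Finset.mem_singleton_self w)
  rcases hhi with ⟨m, hm, h⟩ | h
  · have hhi2 : p.hi = pathE hn m := Finset.eq_of_subset_of_card_le h
      (by rw [hlocard.2, card_pathE hn hm])
    rw [hhi2] at hwhi
    right; right; refine ⟨m, hm, ?_⟩
    rw [pathE, Finset.mem_insert, Finset.mem_singleton] at hwhi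
    rcases hwhi with rfl | rfl
    · exact Or.inl (vpair_ext (by rw [hw, bwdL_lo hn hm]) (by rw [hhi2, bwdL_hi hn hm]))
    · exact Or.inr (vpair_ext (by rw [hw, fwdL_lo hn hm]) (by rw [hhi2, fwdL_hi hn hm]))
  · have hhi2 : p.hi = ellE n := Finset.eq_of_subset_of_card_le h
      (by rw [hlocard.2, card_ellE])
    rw [hhi2] at hwhi
    rw [ellE, Finset.mem_insert, Finset.mem_singleton] at hwhi
    rcases hwhi with rfl | rfl
    · exact Or.inl (vpair_ext (by rw [hw]; rfl) (by rw [hhi2]; rfl))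
    · exact Or.inr (Or.inl (vpair_ext (by rw [hw]; rfl) (by rw [hhi2, l1_hi])))

lemma l0_ne_l1 (hn : 3 ≤ n) : l0 hn (n := n) ≠ l1 hn := by
  intro h; have := congrArg VPair.lo h
  simp [Fin.ext_iff] at this

lemma inl_not_mem_ellE (x : Fin n) : (Sum.inl x : LV n) ∉ ellE n := by simp [ellE]

/-- no closed paths at all on the forest side -/
lemma L_no_closed_path (hn : 3 ≤ n) (σ : Finset (VPair (LL n)))
    (hdvf : IsDVF {p | p ∈ σ}) : ¬ HasClosedPath {p | p ∈ σ} := by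
  rintro ⟨k, hk, c, hc, hp⟩
  haveI : NeZero k := ⟨hk.ne'⟩
  simp only [Set.mem_setOf_eq] at hc
  have noL : ∀ i, c i ≠ l0 hn ∧ c i ≠ l1 hn := by
    intro i
    constructor
    · intro hi
      have hstep := hp i
      rw [hi] at hstep
      rcases L_pair_classify hn (c (i+1)) with hA | hB | ⟨m, hm, hB | hF⟩
      · rw [hA] at hstep; exact hstep.2.1 rfl
      · have hne : c (i+1) ≠ c i := by
          rw [hi, hB]; intro hcon
          exact l0_ne_l1 hn ((congrArg id hcon).symm)
        have hcompat := hdvf _ (hc (i+1)) _ (hc i) hne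
        apply hcompat.2.2.2
        rw [hi, hB, l1_hi, l0_hi]
      · rw [hB] at hstep
        have hmem : (Sum.inl (qF hn m) : LV n) ∈ (l0 hn).hi :=
          hstep.1 (by rw [bwdL_lo hn hm]; exact Finset.mem_singleton_self _)
        exact inl_not_mem_ellE _ hmem
      · rw [hF] at hstep
        have hmem : (Sum.inl (qF hn (m+1)) : LV n) ∈ (l0 hn).hi :=
          hstep.1 (by rw [fwdL_lo hn hm]; exact Finset.mem_singleton_self _)
        exact inl_not_mem_ellE _ hmem
    · intro hi
      have hstep := hp i
      rw [hi] at hstep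
      rcases L_pair_classify hn (c (i+1)) with hA | hB | ⟨m, hm, hB | hF⟩
      · have hne : c (i+1) ≠ c i := by
          rw [hi, hA]; intro hcon
          exact l0_ne_l1 hn hcon
        have hcompat := hdvf _ (hc (i+1)) _ (hc i) hne
        apply hcompat.2.2.2
        rw [hi, hA, l1_hi, l0_hi]
      · rw [hB] at hstep; exact hstep.2.1 rfl
      · rw [hB] at hstep
        have hmem : (Sum.inl (qF hn m) : LV n) ∈ (l1 hn).hi :=
          hstep.1 (by rw [bwdL_lo hn hm]; exact Finset.mem_singleton_self _)
        rw [l1_hi] at hmem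
        exact inl_not_mem_ellE _ hmem
      · rw [hF] at hstep
        have hmem : (Sum.inl (qF hn (m+1)) : LV n) ∈ (l1 hn).hi :=
          hstep.1 (by rw [fwdL_lo hn hm]; exact Finset.mem_singleton_self _)
        rw [l1_hi] at hmem
        exact inl_not_mem_ellE _ hmem
  have memPathE : ∀ {x : Fin n} {m : ℕ}, (Sum.inl x : LV n) ∈ pathE hn m →
      x = qF hn m ∨ x = qF hn (m+1) := by
    intro x m h
    rw [pathE, Finset.mem_insert, Finset.mem_singleton] at h
    rcases h with h | h
    · exact Or.inl (Sum.inl_injective h)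
    · exact Or.inr (Sum.inl_injective h)
  have stepBL : ∀ (i : ZMod k) (m : ℕ), m + 1 < n → c i = bwdL hn m →
      (m+1) + 1 < n ∧ c (i+1) = bwdL hn (m+1) := by
    intro i m hm hi
    have hstep := hp i
    rw [hi] at hstep
    rcases L_pair_classify hn (c (i+1)) with hA | hB | ⟨m', hm', hB | hF⟩
    · exact absurd hA (noL _).1
    · exact absurd hB (noL _).2
    · rw [hB] at hstep
      have hmem : (Sum.inl (qF hn m') : LV n) ∈ (bwdL hn m).hi :=
        hstep.1 (by rw [bwdL_lo hn hm']; exact Finset.mem_singleton_self _)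
      rw [bwdL_hi hn hm] at hmem
      rcases memPathE hmem with h | h
      · exfalso
        apply hstep.2.1
        rw [bwdL_lo hn hm', bwdL_lo hn hm, h]
      · have : m' = m + 1 := qF_inj hn (by omega) (by omega) h
        subst this
        exact ⟨hm', hB⟩
    · rw [hF] at hstep
      have hmem : (Sum.inl (qF hn (m'+1)) : LV n) ∈ (bwdL hn m).hi :=
        hstep.1 (by rw [fwdL_lo hn hm']; exact Finset.mem_singleton_self _)
      rw [bwdL_hi hn hm] at hmem
      rcases memPathE hmem with h | h
      · exfalso
        apply hstep.2.1
        rw [fwdL_lo hn hm', bwdL_lo hn hm, h]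
      · exfalso
        have : m' = m := by
          have := qF_inj hn (by omega) (by omega) h; omega
        subst this
        have hne : c (i+1) ≠ c i := by
          rw [hi, hF]; intro hcon
          have hlo := congrArg VPair.lo hcon
          rw [fwdL_lo hn hm', bwdL_lo hn hm', Finset.singleton_inj] at hlo
          exact (qF_succ_ne hn hm') (Sum.inl_injective hlo).symm
        have hcompat := hdvf _ (hc (i+1)) _ (hc i) hne
        apply hcompat.2.2.2
        rw [hi, hF, fwdL_hi hn hm', bwdL_hi hn hm']
  have stepFL : ∀ (i : ZMod k) (m : ℕ), m + 1 < n → c i = fwdL hn m →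
      ∃ m', m' + 1 = m ∧ m' + 1 < n ∧ c (i+1) = fwdL hn m' := by
    intro i m hm hi
    have hstep := hp i
    rw [hi] at hstep
    rcases L_pair_classify hn (c (i+1)) with hA | hB | ⟨m', hm', hB | hF⟩
    · exact absurd hA (noL _).1
    · exact absurd hB (noL _).2
    · rw [hB] at hstep
      have hmem : (Sum.inl (qF hn m') : LV n) ∈ (fwdL hn m).hi :=
        hstep.1 (by rw [bwdL_lo hn hm']; exact Finset.mem_singleton_self _)
      rw [fwdL_hi hn hm] at hmem
      rcases memPathE hmem with h | h
      · exfalso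
        have : m' = m := qF_inj hn (by omega) (by omega) h
        subst this
        have hne : c (i+1) ≠ c i := by
          rw [hi, hB]; intro hcon
          have hlo := congrArg VPair.lo hcon
          rw [fwdL_lo hn hm', bwdL_lo hn hm', Finset.singleton_inj] at hlo
          exact (qF_succ_ne hn hm') (Sum.inl_injective hlo)
        have hcompat := hdvf _ (hc (i+1)) _ (hc i) hne
        apply hcompat.2.2.2
        rw [hi, hB, bwdL_hi hn hm', fwdL_hi hn hm']
      · exfalso
        apply hstep.2.1
        rw [bwdL_lo hn hm', fwdL_lo hn hm, h]
    · rw [hF] at hstep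
      have hmem : (Sum.inl (qF hn (m'+1)) : LV n) ∈ (fwdL hn m).hi :=
        hstep.1 (by rw [fwdL_lo hn hm']; exact Finset.mem_singleton_self _)
      rw [fwdL_hi hn hm] at hmem
      rcases memPathE hmem with h | h
      · have : m' + 1 = m := qF_inj hn (by omega) (by omega) h
        exact ⟨m', this, hm', hF⟩
      · exfalso
        apply hstep.2.1
        rw [fwdL_lo hn hm', fwdL_lo hn hm, h]
  rcases L_pair_classify hn (c 0) with hA | hB | ⟨m0, hm0, hB | hF⟩
  · exact (noL _).1 hA
  · exact (noL _).2 hB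
  · have key : ∀ j : ℕ, ∃ m, m + 1 < n ∧ m = m0 + j ∧ c (j : ZMod k) = bwdL hn m := by
      intro j
      induction j with
      | zero => exact ⟨m0, hm0, by omega, by simpa using hB⟩
      | succ j ih =>
        obtain ⟨m, hm, hmeq, hcj⟩ := ih
        obtain ⟨hm1, hc1⟩ := stepBL _ _ hm hcj
        refine ⟨m+1, hm1, by omega, ?_⟩
        have hcast : ((j+1 : ℕ) : ZMod k) = (j : ZMod k) + 1 := by push_cast; ring
        rw [hcast]; exact hc1
    obtain ⟨m, hm, hmeq, -⟩ := key n
    omega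
  · have key : ∀ j : ℕ, ∃ m, m + 1 < n ∧ m + j = m0 ∧ c (j : ZMod k) = fwdL hn m := by
      intro j
      induction j with
      | zero => exact ⟨m0, hm0, by omega, by simpa using hF⟩
      | succ j ih =>
        obtain ⟨m, hm, hmeq, hcj⟩ := ih
        obtain ⟨m', hm'eq, hm', hc1⟩ := stepFL _ _ hm hcj
        refine ⟨m', hm', by omega, ?_⟩
        have hcast : ((j+1 : ℕ) : ZMod k) = (j : ZMod k) + 1 := by push_cast; ring
        rw [hcast]; exact hc1
    obtain ⟨m, hm, hmeq, -⟩ := key (m0 + 1)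
    omega

/-! ### Morse complex characterizations -/

lemma L_morse_iff (hn : 3 ≤ n) (σ : Finset (VPair (LL n))) :
    (MorseComplex (LL n)).faces σ ↔ σ.Nonempty ∧ IsDVF {p | p ∈ σ} := by
  constructor
  · rintro ⟨h1, h2, -⟩; exact ⟨h1, h2⟩
  · rintro ⟨h1, h2⟩; exact ⟨h1, h2, L_no_closed_path hn σ h2⟩

lemma G_iff (hn : 3 ≤ n) (v : ZMod n) (σ : Finset (VPair (KK n v))) :
    (((MorseComplex (KK n v)).faces σ ∧ bwdC hn v v ∉ σ) ∧ fwdC hn v (v-1) ∉ σ) ↔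
      σ.Nonempty ∧ IsDVF {p | p ∈ σ} ∧ bwdC hn v v ∉ σ ∧ fwdC hn v (v-1) ∉ σ := by
  constructor
  · rintro ⟨⟨⟨h1, h2, -⟩, h3⟩, h4⟩; exact ⟨h1, h2, h3, h4⟩
  · rintro ⟨h1, h2, h3, h4⟩
    exact ⟨⟨⟨h1, h2, K_no_closed_path hn v σ h2 h3 h4⟩, h3⟩, h4⟩

/-! ### compatibility helper -/

lemma compat_iff_lo_hi {V : Type*} {K : SComplex V} {p q : VPair K}
    (hp : p.lo.card = 1) (hq : q.lo.card = 1) :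
    VPair.Compatible p q ↔ p.lo ≠ q.lo ∧ p.hi ≠ q.hi := by
  have hp2 : p.hi.card = 2 := by rw [p.card_eq, hp]
  have hq2 : q.hi.card = 2 := by rw [q.card_eq, hq]
  constructor
  · exact fun h => ⟨h.1, h.2.2.2⟩
  · rintro ⟨h1, h2⟩
    refine ⟨h1, fun he => ?_, fun he => ?_, h2⟩
    · rw [he] at hp; omega
    · rw [← he] at hq; omega

lemma K_lo_card (hn : 3 ≤ n) (v : ZMod n) (p : VPair (KK n v)) : p.lo.card = 1 := by
  rcases K_pair_classify hn v p with h | h | ⟨t, h | h⟩ <;> subst h <;> simp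

lemma L_lo_card (hn : 3 ≤ n) (p : VPair (LL n)) : p.lo.card = 1 := by
  rcases L_pair_classify hn p with h | h | ⟨m, hm, h | h⟩ <;> subst h
  · simp
  · simp
  · rw [bwdL_lo hn hm]; simp
  · rw [fwdL_lo hn hm]; simp

/-! ### index arithmetic -/

lemma dd_lt (hn : 3 ≤ n) {v t : ZMod n} (h : t ≠ v - 1) : (t - v).val + 1 < n := by
  haveI : NeZero n := ⟨by omega⟩
  have hlt : (t - v).val < n := ZMod.val_lt _
  rcases lt_or_eq_of_le (Nat.le_of_lt_succ (by omega : (t - v).val < n - 1 + 1)) with h' | h'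
  · omega
  · exfalso
    apply h
    have : ((((n : ℕ) - 1 : ℕ)) : ZMod n) = t - v := by
      rw [← h']
      rw [ZMod.natCast_val, ZMod.cast_id]
    have hneg : (((n : ℕ) - 1 : ℕ) : ZMod n) = - 1 := by
      push_cast [Nat.cast_sub (by omega : 1 ≤ n)]
      simp
    rw [hneg] at this
    linear_combination -this

lemma dd_pos (hn : 3 ≤ n) {v s : ZMod n} (h : s ≠ v) : 0 < (s - v).val := by
  haveI : NeZero n := ⟨by omega⟩
  rcases Nat.eq_zero_or_pos (s - v).val with h' | h'
  · exfalso
    apply h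
    have := (ZMod.val_eq_zero (s - v)).1 h'
    linear_combination this
  · exact h'

lemma val_cast_eq (hn : 3 ≤ n) (a : ZMod n) : ((a.val : ℕ) : ZMod n) = a := by
  haveI : NeZero n := ⟨by omega⟩
  rw [ZMod.natCast_val, ZMod.cast_id]

lemma fwdC_inj (hn : 3 ≤ n) {v t t' : ZMod n} (h : fwdC hn v t = fwdC hn v t') : t = t' := by
  have := congrArg VPair.hi h
  rw [fwdC_hi, fwdC_hi] at this
  exact cycE_inj hn this

lemma bwdC_inj (hn : 3 ≤ n) {v t t' : ZMod n} (h : bwdC hn v t = bwdC hn v t') : t = t' := by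
  have := congrArg VPair.hi h
  rw [bwdC_hi, bwdC_hi] at this
  exact cycE_inj hn this

lemma bwdL_inj (hn : 3 ≤ n) {m m' : ℕ} (hm : m + 1 < n) (hm' : m' + 1 < n)
    (h : bwdL hn m = bwdL hn m') : m = m' := by
  have := congrArg VPair.hi h
  rw [bwdL_hi hn hm, bwdL_hi hn hm'] at this
  exact pathE_inj hn hm hm' this

lemma fwdL_inj (hn : 3 ≤ n) {m m' : ℕ} (hm : m + 1 < n) (hm' : m' + 1 < n)
    (h : fwdL hn m = fwdL hn m') : m = m' := by
  have := congrArg VPair.hi h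
  rw [fwdL_hi hn hm, fwdL_hi hn hm'] at this
  exact pathE_inj hn hm hm' this

lemma bwdL_ne_l0 (hn : 3 ≤ n) {m : ℕ} (hm : m + 1 < n) : bwdL hn m ≠ l0 hn := by
  intro h
  have := congrArg VPair.hi h
  rw [bwdL_hi hn hm, l0_hi] at this
  exact ellE_ne_pathE hn m this.symm

lemma bwdL_ne_l1 (hn : 3 ≤ n) {m : ℕ} (hm : m + 1 < n) : bwdL hn m ≠ l1 hn := by
  intro h
  have := congrArg VPair.hi h
  rw [bwdL_hi hn hm, l1_hi] at this
  exact ellE_ne_pathE hn m this.symm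

lemma fwdL_ne_l0 (hn : 3 ≤ n) {m : ℕ} (hm : m + 1 < n) : fwdL hn m ≠ l0 hn := by
  intro h
  have := congrArg VPair.hi h
  rw [fwdL_hi hn hm, l0_hi] at this
  exact ellE_ne_pathE hn m this.symm

lemma fwdL_ne_l1 (hn : 3 ≤ n) {m : ℕ} (hm : m + 1 < n) : fwdL hn m ≠ l1 hn := by
  intro h
  have := congrArg VPair.hi h
  rw [fwdL_hi hn hm, l1_hi] at this
  exact ellE_ne_pathE hn m this.symm

lemma bwdL_ne_fwdL (hn : 3 ≤ n) {m m' : ℕ} (hm : m + 1 < n) (hm' : m' + 1 < n) :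
    bwdL hn m ≠ fwdL hn m' := by
  intro h
  have hhi := congrArg VPair.hi h
  rw [bwdL_hi hn hm, fwdL_hi hn hm'] at hhi
  have hmm : m = m' := pathE_inj hn hm hm' hhi
  subst hmm
  have hlo := congrArg VPair.lo h
  rw [bwdL_lo hn hm, fwdL_lo hn hm, Finset.singleton_inj] at hlo
  exact qF_succ_ne hn hm (Sum.inl_injective hlo)

lemma fwdC_ne_aP (hn : 3 ≤ n) (v t : ZMod n) : fwdC hn v t ≠ aP hn v :=
  fun h => aP_ne_fwdC hn v t h.symm

lemma fwdC_ne_bP (hn : 3 ≤ n) (v t : ZMod n) : fwdC hn v t ≠ bP hn v :=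
  fun h => bP_ne_fwdC hn v t h.symm

lemma bwdC_ne_aP (hn : 3 ≤ n) (v t : ZMod n) : bwdC hn v t ≠ aP hn v :=
  fun h => aP_ne_bwdC hn v t h.symm

lemma bwdC_ne_bP (hn : 3 ≤ n) (v t : ZMod n) : bwdC hn v t ≠ bP hn v :=
  fun h => bP_ne_bwdC hn v t h.symm

/-- conversion of the successor relation -/
lemma succ_val_iff (hn : 3 ≤ n) {v t s : ZMod n} (ht : t ≠ v - 1) :
    t + 1 = s ↔ (t - v).val + 1 = (s - v).val := by
  haveI : NeZero n := ⟨by omega⟩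
  haveI : Fact (1 < n) := ⟨by omega⟩
  constructor
  · intro h
    have : s - v = (t - v) + 1 := by rw [← h]; ring
    rw [this]
    rw [ZMod.val_add_of_lt]
    · rw [ZMod.val_one]
    · rw [ZMod.val_one]
      exact dd_lt hn ht
  · intro h
    have h1 : (((t - v).val + 1 : ℕ) : ZMod n) = ((s - v).val : ℕ) := by rw [h]
    push_cast at h1
    rw [val_cast_eq hn, val_cast_eq hn] at h1
    linear_combination h1

lemma eq_val_iff (hn : 3 ≤ n) {v t s : ZMod n} : t = s ↔ (t - v).val = (s - v).val := by
  constructor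
  · intro h; rw [h]
  · intro h
    have h1 : (((t - v).val : ℕ) : ZMod n) = ((s - v).val : ℕ) := by rw [h]
    rw [val_cast_eq hn, val_cast_eq hn] at h1
    linear_combination h1

/-! ### the isomorphism maps -/

open Classical in
noncomputable def toF (hn : 3 ≤ n) (v : ZMod n) : VPair (KK n v) → VPair (LL n) := fun p =>
  if p = aP hn v then l0 hn
  else if p = bP hn v then l1 hn
  else if h : ∃ t, p = fwdC hn v t then bwdL hn ((h.choose - v).val)
  else if h : ∃ t, p = bwdC hn v t then fwdL hn ((h.choose - v).val - 1)
  else l0 hn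

open Classical in
noncomputable def invF (hn : 3 ≤ n) (v : ZMod n) : VPair (LL n) → VPair (KK n v) := fun q =>
  if q = l0 hn then aP hn v
  else if q = l1 hn then bP hn v
  else if h : ∃ m, m + 1 < n ∧ q = bwdL hn m then fwdC hn v (v + h.choose)
  else if h : ∃ m, m + 1 < n ∧ q = fwdL hn m then bwdC hn v (v + h.choose + 1)
  else aP hn v

@[simp] lemma toF_aP (hn : 3 ≤ n) (v : ZMod n) : toF hn v (aP hn v) = l0 hn := by
  rw [toF, if_pos rfl]

@[simp] lemma toF_bP (hn : 3 ≤ n) (v : ZMod n) : toF hn v (bP hn v) = l1 hn := by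
  rw [toF, if_neg (fun h => aP_ne_bP hn v h.symm), if_pos rfl]

lemma toF_fwdC (hn : 3 ≤ n) (v t : ZMod n) :
    toF hn v (fwdC hn v t) = bwdL hn ((t - v).val) := by
  have hex : ∃ t', fwdC hn v t = fwdC hn v t' := ⟨t, rfl⟩
  rw [toF, if_neg (fwdC_ne_aP hn v t), if_neg (fwdC_ne_bP hn v t), dif_pos hex]
  rw [← fwdC_inj hn hex.choose_spec]

lemma toF_bwdC (hn : 3 ≤ n) (v t : ZMod n) :
    toF hn v (bwdC hn v t) = fwdL hn ((t - v).val - 1) := by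
  have hex : ∃ t', bwdC hn v t = bwdC hn v t' := ⟨t, rfl⟩
  have hnex : ¬ ∃ t', bwdC hn v t = fwdC hn v t' := by
    rintro ⟨t', h⟩; exact bwdC_ne_fwdC hn v t t' h
  rw [toF, if_neg (bwdC_ne_aP hn v t), if_neg (bwdC_ne_bP hn v t), dif_neg hnex, dif_pos hex]
  rw [← bwdC_inj hn hex.choose_spec]

@[simp] lemma invF_l0 (hn : 3 ≤ n) (v : ZMod n) : invF hn v (l0 hn) = aP hn v := by
  rw [invF, if_pos rfl]

@[simp] lemma invF_l1 (hn : 3 ≤ n) (v : ZMod n) : invF hn v (l1 hn) = bP hn v := by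
  rw [invF, if_neg (fun h => l0_ne_l1 hn h.symm), if_pos rfl]

lemma invF_bwdL (hn : 3 ≤ n) (v : ZMod n) {m : ℕ} (hm : m + 1 < n) :
    invF hn v (bwdL hn m) = fwdC hn v (v + m) := by
  have hex : ∃ m', m' + 1 < n ∧ bwdL hn m = bwdL hn m' := ⟨m, hm, rfl⟩
  rw [invF, if_neg (bwdL_ne_l0 hn hm), if_neg (bwdL_ne_l1 hn hm), dif_pos hex]
  congr 2
  exact congrArg _ (bwdL_inj hn hm hex.choose_spec.1 hex.choose_spec.2).symm

lemma invF_fwdL (hn : 3 ≤ n) (v : ZMod n) {m : ℕ} (hm : m + 1 < n) :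
    invF hn v (fwdL hn m) = bwdC hn v (v + m + 1) := by
  have hex : ∃ m', m' + 1 < n ∧ fwdL hn m = fwdL hn m' := ⟨m, hm, rfl⟩
  have hnex : ¬ ∃ m', m' + 1 < n ∧ fwdL hn m = bwdL hn m' := by
    rintro ⟨m', hm', h⟩; exact bwdL_ne_fwdL hn hm' hm h.symm
  rw [invF, if_neg (fwdL_ne_l0 hn hm), if_neg (fwdL_ne_l1 hn hm), dif_neg hnex, dif_pos hex]
  have := fwdL_inj hn hm hex.choose_spec.1 hex.choose_spec.2
  rw [← this]

/-! ### roundtrip lemmas -/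

lemma natc_inj (hn : 3 ≤ n) {m m' : ℕ} (hm : m < n) (hm' : m' < n)
    (h : (m : ZMod n) = (m' : ZMod n)) : m = m' := by
  haveI : NeZero n := ⟨by omega⟩
  have := congrArg ZMod.val h
  rwa [ZMod.val_cast_of_lt hm, ZMod.val_cast_of_lt hm'] at this

lemma left_inv_fwdC (hn : 3 ≤ n) (v : ZMod n) {t : ZMod n} (ht : t ≠ v - 1) :
    invF hn v (toF hn v (fwdC hn v t)) = fwdC hn v t := by
  rw [toF_fwdC, invF_bwdL hn v (dd_lt hn ht)]
  congr 1
  rw [val_cast_eq hn]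
  ring

lemma left_inv_bwdC (hn : 3 ≤ n) (v : ZMod n) {s : ZMod n} (hs : s ≠ v) :
    invF hn v (toF hn v (bwdC hn v s)) = bwdC hn v s := by
  haveI : NeZero n := ⟨by omega⟩
  have hd := dd_pos hn hs
  have hlt : ((s - v).val - 1) + 1 < n := by
    have := ZMod.val_lt (s - v)
    omega
  rw [toF_bwdC, invF_fwdL hn v hlt]
  congr 1
  have hcast : (((s - v).val - 1 : ℕ) : ZMod n) = ((s - v).val : ℕ) - 1 := by
    push_cast [Nat.cast_sub (by omega : 1 ≤ (s - v).val)]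
    ring
  rw [hcast, val_cast_eq hn]
  ring

lemma right_inv_bwdL (hn : 3 ≤ n) (v : ZMod n) {m : ℕ} (hm : m + 1 < n) :
    toF hn v (invF hn v (bwdL hn m)) = bwdL hn m := by
  haveI : NeZero n := ⟨by omega⟩
  rw [invF_bwdL hn v hm, toF_fwdC]
  congr 1
  have : v + (m : ZMod n) - v = (m : ZMod n) := by ring
  rw [this, ZMod.val_cast_of_lt (by omega)]

lemma right_inv_fwdL (hn : 3 ≤ n) (v : ZMod n) {m : ℕ} (hm : m + 1 < n) :
    toF hn v (invF hn v (fwdL hn m)) = fwdL hn m := by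
  haveI : NeZero n := ⟨by omega⟩
  rw [invF_fwdL hn v hm, toF_bwdC]
  congr 1
  have : v + (m : ZMod n) + 1 - v = ((m + 1 : ℕ) : ZMod n) := by push_cast; ring
  rw [this, ZMod.val_cast_of_lt (by omega)]
  omega

/-! ### compatibility disequality helpers -/

lemma sing_ne {α : Type*} {x y : α} (h : x ≠ y) : ({x} : Finset α) ≠ {y} := by
  simpa using h

lemma qF_ne (hn : 3 ≤ n) {m m' : ℕ} (hm : m < n) (hm' : m' < n) (h : m ≠ m') :
    qF hn m ≠ qF hn m' := fun he => h (qF_inj hn hm hm' he)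

lemma pathE_ne (hn : 3 ≤ n) {m m' : ℕ} (hm : m + 1 < n) (hm' : m' + 1 < n) (h : m ≠ m') :
    (pathE hn m : Finset (LV n)) ≠ pathE hn m' := fun he => h (pathE_inj hn hm hm' he)

lemma cycE_ne (hn : 3 ≤ n) {t t' : ZMod n} (h : t ≠ t') :
    (cycE t : Finset (KV n)) ≠ cycE t' := fun he => h (cycE_inj hn he)

lemma sing_inl_ne_inr (x : Fin n) (y : Fin 2) :
    ({Sum.inl x} : Finset (LV n)) ≠ {Sum.inr y} := by simp

lemma sing_inr_ne_inl (x : Fin n) (y : Fin 2) :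
    ({Sum.inr y} : Finset (LV n)) ≠ {Sum.inl x} := by simp

lemma compat_l0_bwdL (hn : 3 ≤ n) {m : ℕ} (hm : m + 1 < n) :
    VPair.Compatible (l0 hn) (bwdL hn m) :=
  (compat_iff_lo_hi (by simp) (L_lo_card hn _)).mpr
    ⟨by rw [l0_lo, bwdL_lo hn hm]; exact sing_inr_ne_inl _ _,
     by rw [l0_hi, bwdL_hi hn hm]; exact ellE_ne_pathE hn m⟩

lemma compat_l0_fwdL (hn : 3 ≤ n) {m : ℕ} (hm : m + 1 < n) :
    VPair.Compatible (l0 hn) (fwdL hn m) :=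
  (compat_iff_lo_hi (by simp) (L_lo_card hn _)).mpr
    ⟨by rw [l0_lo, fwdL_lo hn hm]; exact sing_inr_ne_inl _ _,
     by rw [l0_hi, fwdL_hi hn hm]; exact ellE_ne_pathE hn m⟩

lemma compat_l1_bwdL (hn : 3 ≤ n) {m : ℕ} (hm : m + 1 < n) :
    VPair.Compatible (l1 hn) (bwdL hn m) :=
  (compat_iff_lo_hi (by simp) (L_lo_card hn _)).mpr
    ⟨by rw [l1_lo, bwdL_lo hn hm]; exact sing_inr_ne_inl _ _,
     by rw [l1_hi, bwdL_hi hn hm]; exact ellE_ne_pathE hn m⟩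

lemma compat_l1_fwdL (hn : 3 ≤ n) {m : ℕ} (hm : m + 1 < n) :
    VPair.Compatible (l1 hn) (fwdL hn m) :=
  (compat_iff_lo_hi (by simp) (L_lo_card hn _)).mpr
    ⟨by rw [l1_lo, fwdL_lo hn hm]; exact sing_inr_ne_inl _ _,
     by rw [l1_hi, fwdL_hi hn hm]; exact ellE_ne_pathE hn m⟩

/-- `toF` preserves compatibility -/
lemma toF_compat (hn : 3 ≤ n) (v : ZMod n) {p q : VPair (KK n v)}
    (hp2 : p ≠ fwdC hn v (v-1)) (hp1 : p ≠ bwdC hn v v)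
    (hq2 : q ≠ fwdC hn v (v-1)) (hq1 : q ≠ bwdC hn v v)
    (hpq : p ≠ q) (hc : VPair.Compatible p q) :
    VPair.Compatible (toF hn v p) (toF hn v q) := by
  haveI : NeZero n := ⟨by omega⟩
  rcases K_pair_classify hn v p with rfl | rfl | ⟨t, rfl | rfl⟩ <;>
    rcases K_pair_classify hn v q with rfl | rfl | ⟨s, rfl | rfl⟩
  · exact absurd rfl hpq
  · exact absurd (by rw [aP_hi, bP_hi]) hc.2.2.2
  · have hs : s ≠ v := fun h => hq1 (congrArg _ h)
    have hd := dd_pos hn hs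
    have hlt : ((s - v).val - 1) + 1 < n := by have := ZMod.val_lt (s - v); omega
    rw [toF_aP, toF_bwdC]
    exact compat_l0_fwdL hn hlt
  · have hs : s ≠ v - 1 := fun h => hq2 (congrArg _ h)
    rw [toF_aP, toF_fwdC]
    exact compat_l0_bwdL hn (dd_lt hn hs)
  · exact absurd (by rw [aP_hi, bP_hi]) hc.2.2.2
  · exact absurd rfl hpq
  · have hs : s ≠ v := fun h => hq1 (congrArg _ h)
    have hd := dd_pos hn hs
    have hlt : ((s - v).val - 1) + 1 < n := by have := ZMod.val_lt (s - v); omega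
    rw [toF_bP, toF_bwdC]
    exact compat_l1_fwdL hn hlt
  · have hs : s ≠ v - 1 := fun h => hq2 (congrArg _ h)
    rw [toF_bP, toF_fwdC]
    exact compat_l1_bwdL hn (dd_lt hn hs)
  -- p = bwdC t
  · have ht : t ≠ v := fun h => hp1 (congrArg _ h)
    have hd := dd_pos hn ht
    have hlt : ((t - v).val - 1) + 1 < n := by have := ZMod.val_lt (t - v); omega
    rw [toF_bwdC, toF_aP]
    exact compat_symm (compat_l0_fwdL hn hlt)
  · have ht : t ≠ v := fun h => hp1 (congrArg _ h)
    have hd := dd_pos hn ht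
    have hlt : ((t - v).val - 1) + 1 < n := by have := ZMod.val_lt (t - v); omega
    rw [toF_bwdC, toF_bP]
    exact compat_symm (compat_l1_fwdL hn hlt)
  · -- bwdC t, bwdC s
    have ht : t ≠ v := fun h => hp1 (congrArg _ h)
    have hs : s ≠ v := fun h => hq1 (congrArg _ h)
    have hts : t ≠ s := fun h => hpq (congrArg _ h)
    have hdt := dd_pos hn ht
    have hds := dd_pos hn hs
    have hltt : ((t - v).val - 1) + 1 < n := by have := ZMod.val_lt (t - v); omega
    have hlts : ((s - v).val - 1) + 1 < n := by have := ZMod.val_lt (s - v); omega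
    have hd : (t - v).val ≠ (s - v).val := fun h => hts ((eq_val_iff hn).2 h)
    rw [toF_bwdC, toF_bwdC]
    refine (compat_iff_lo_hi (L_lo_card hn _) (L_lo_card hn _)).mpr ⟨?_, ?_⟩
    · rw [fwdL_lo hn hltt, fwdL_lo hn hlts]
      exact sing_ne (fun h => hd (by
        have := qF_inj hn (by omega) (by omega) (Sum.inl_injective h); omega))
    · rw [fwdL_hi hn hltt, fwdL_hi hn hlts]
      exact pathE_ne hn hltt hlts (by omega)
  · -- bwdC t, fwdC s
    have ht : t ≠ v := fun h => hp1 (congrArg _ h)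
    have hs : s ≠ v - 1 := fun h => hq2 (congrArg _ h)
    have hdt := dd_pos hn ht
    have hltt : ((t - v).val - 1) + 1 < n := by have := ZMod.val_lt (t - v); omega
    have hlts := dd_lt hn hs
    -- from hc : lo {t} ≠ lo {s+1}  and  hi cycE t ≠ cycE s
    have hlo : t ≠ s + 1 := by
      intro h
      apply hc.1
      rw [bwdC_lo, fwdC_lo, h]
    have hhi : t ≠ s := by
      intro h
      apply hc.2.2.2
      rw [bwdC_hi, fwdC_hi, h]
    have hd1 : (t - v).val ≠ (s - v).val := fun h => hhi ((eq_val_iff hn).2 h)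
    have hd2 : (t - v).val - 1 ≠ (s - v).val := by
      intro h
      apply hlo
      have : (s - v).val + 1 = (t - v).val := by omega
      exact ((succ_val_iff hn hs).2 this).symm
    rw [toF_bwdC, toF_fwdC]
    refine (compat_iff_lo_hi (L_lo_card hn _) (L_lo_card hn _)).mpr ⟨?_, ?_⟩
    · rw [fwdL_lo hn hltt, bwdL_lo hn hlts]
      exact sing_ne (fun h => hd1 (by
        have := qF_inj hn (by omega) (by omega) (Sum.inl_injective h); omega))
    · rw [fwdL_hi hn hltt, bwdL_hi hn hlts]
      exact pathE_ne hn hltt hlts hd2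
  -- p = fwdC t
  · have ht : t ≠ v - 1 := fun h => hp2 (congrArg _ h)
    rw [toF_fwdC, toF_aP]
    exact compat_symm (compat_l0_bwdL hn (dd_lt hn ht))
  · have ht : t ≠ v - 1 := fun h => hp2 (congrArg _ h)
    rw [toF_fwdC, toF_bP]
    exact compat_symm (compat_l1_bwdL hn (dd_lt hn ht))
  · -- fwdC t, bwdC s
    have ht : t ≠ v - 1 := fun h => hp2 (congrArg _ h)
    have hs : s ≠ v := fun h => hq1 (congrArg _ h)
    have hds := dd_pos hn hs
    have hltt := dd_lt hn ht
    have hlts : ((s - v).val - 1) + 1 < n := by have := ZMod.val_lt (s - v); omega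
    have hlo : s ≠ t + 1 := by
      intro h
      apply hc.1
      rw [bwdC_lo, fwdC_lo, h]
    have hhi : t ≠ s := by
      intro h
      apply hc.2.2.2
      rw [bwdC_hi, fwdC_hi, h]
    have hd1 : (t - v).val ≠ (s - v).val := fun h => hhi ((eq_val_iff hn).2 h)
    have hd2 : (t - v).val ≠ (s - v).val - 1 := by
      intro h
      apply hlo
      have : (t - v).val + 1 = (s - v).val := by omega
      exact ((succ_val_iff hn ht).2 this).symm
    rw [toF_fwdC, toF_bwdC]
    refine (compat_iff_lo_hi (L_lo_card hn _) (L_lo_card hn _)).mpr ⟨?_, ?_⟩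
    · rw [bwdL_lo hn hltt, fwdL_lo hn hlts]
      exact sing_ne (fun h => hd1 (by
        have := qF_inj hn (by omega) (by omega) (Sum.inl_injective h); omega))
    · rw [bwdL_hi hn hltt, fwdL_hi hn hlts]
      exact pathE_ne hn hltt hlts hd2
  · -- fwdC t, fwdC s
    have ht : t ≠ v - 1 := fun h => hp2 (congrArg _ h)
    have hs : s ≠ v - 1 := fun h => hq2 (congrArg _ h)
    have hts : t ≠ s := fun h => hpq (congrArg _ h)
    have hltt := dd_lt hn ht
    have hlts := dd_lt hn hs
    have hd : (t - v).val ≠ (s - v).val := fun h => hts ((eq_val_iff hn).2 h)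
    rw [toF_fwdC, toF_fwdC]
    refine (compat_iff_lo_hi (L_lo_card hn _) (L_lo_card hn _)).mpr ⟨?_, ?_⟩
    · rw [bwdL_lo hn hltt, bwdL_lo hn hlts]
      exact sing_ne (fun h => hd (qF_inj hn (by omega) (by omega) (Sum.inl_injective h)))
    · rw [bwdL_hi hn hltt, bwdL_hi hn hlts]
      exact pathE_ne hn hltt hlts hd

lemma compat_aP_fwdC (hn : 3 ≤ n) (v : ZMod n) {t : ZMod n} (h : v ≠ t + 1) :
    VPair.Compatible (aP hn v) (fwdC hn v t) :=
  (compat_iff_lo_hi (K_lo_card hn v _) (K_lo_card hn v _)).mpr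
    ⟨by rw [aP_lo, fwdC_lo]; exact sing_ne (by simpa using h),
     by rw [aP_hi, fwdC_hi]; exact leafE_ne_cycE v t⟩

lemma compat_aP_bwdC (hn : 3 ≤ n) (v : ZMod n) {s : ZMod n} (h : v ≠ s) :
    VPair.Compatible (aP hn v) (bwdC hn v s) :=
  (compat_iff_lo_hi (K_lo_card hn v _) (K_lo_card hn v _)).mpr
    ⟨by rw [aP_lo, bwdC_lo]; exact sing_ne (by simpa using h),
     by rw [aP_hi, bwdC_hi]; exact leafE_ne_cycE v s⟩

lemma cast_succ_ne_zero (hn : 3 ≤ n) {m : ℕ} (hm : m + 1 < n) :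
    ((m : ZMod n) + 1) ≠ 0 := by
  haveI : NeZero n := ⟨by omega⟩
  intro h
  have h1 : (((m+1 : ℕ)) : ZMod n) = 0 := by push_cast; linear_combination h
  have := congrArg ZMod.val h1
  rw [ZMod.val_cast_of_lt (by omega), ZMod.val_zero] at this
  omega

/-- `invF` preserves compatibility -/
lemma invF_compat (hn : 3 ≤ n) (v : ZMod n) {p q : VPair (LL n)}
    (hpq : p ≠ q) (hc : VPair.Compatible p q) :
    VPair.Compatible (invF hn v p) (invF hn v q) := by
  haveI : NeZero n := ⟨by omega⟩
  rcases L_pair_classify hn p with rfl | rfl | ⟨m, hm, rfl | rfl⟩ <;>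
    rcases L_pair_classify hn q with rfl | rfl | ⟨m', hm', rfl | rfl⟩
  · exact absurd rfl hpq
  · exact absurd (by rw [l0_hi, l1_hi]) hc.2.2.2
  · rw [invF_l0, invF_bwdL hn v hm']
    exact compat_aP_fwdC hn v (by
      intro h
      exact cast_succ_ne_zero hn hm' (by linear_combination h.symm))
  · rw [invF_l0, invF_fwdL hn v hm']
    exact compat_aP_bwdC hn v (by
      intro h
      exact cast_succ_ne_zero hn hm' (by linear_combination h.symm))
  · exact absurd (by rw [l0_hi, l1_hi]) hc.2.2.2
  · exact absurd rfl hpq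
  · rw [invF_l1, invF_bwdL hn v hm']
    exact compat_bP hn v _ (Or.inr ⟨_, rfl⟩)
  · rw [invF_l1, invF_fwdL hn v hm']
    exact compat_bP hn v _ (Or.inl ⟨_, rfl⟩)
  -- p = bwdL m
  · rw [invF_bwdL hn v hm, invF_l0]
    exact compat_symm (compat_aP_fwdC hn v (by
      intro h
      exact cast_succ_ne_zero hn hm (by linear_combination h.symm)))
  · rw [invF_bwdL hn v hm, invF_l1]
    exact compat_symm (compat_bP hn v _ (Or.inr ⟨_, rfl⟩))
  · -- bwdL m, bwdL m'
    have hmm : m ≠ m' := by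
      intro h
      apply hc.2.2.2
      rw [bwdL_hi hn hm, bwdL_hi hn hm', h]
    have hz : (m : ZMod n) ≠ (m' : ZMod n) := fun h => hmm (natc_inj hn (by omega) (by omega) h)
    rw [invF_bwdL hn v hm, invF_bwdL hn v hm']
    refine (compat_iff_lo_hi (K_lo_card hn v _) (K_lo_card hn v _)).mpr ⟨?_, ?_⟩
    · rw [fwdC_lo, fwdC_lo]
      exact sing_ne (by simpa using (fun h => hz (by linear_combination h)))
    · rw [fwdC_hi, fwdC_hi]
      exact cycE_ne hn (fun h => hz (by linear_combination h))
  · -- bwdL m, fwdL m'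
    have hmm1 : m ≠ m' + 1 := by
      intro h
      apply hc.1
      rw [bwdL_lo hn hm, fwdL_lo hn hm', h]
    have hmm : m ≠ m' := by
      intro h
      apply hc.2.2.2
      rw [bwdL_hi hn hm, fwdL_hi hn hm', h]
    have hz : (m : ZMod n) ≠ (m' : ZMod n) := fun h => hmm (natc_inj hn (by omega) (by omega) h)
    have hz1 : (m : ZMod n) ≠ (m' : ZMod n) + 1 := by
      intro h
      apply hmm1
      apply natc_inj hn (by omega) (by omega)
      push_cast
      linear_combination h
    rw [invF_bwdL hn v hm, invF_fwdL hn v hm']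
    refine (compat_iff_lo_hi (K_lo_card hn v _) (K_lo_card hn v _)).mpr ⟨?_, ?_⟩
    · rw [fwdC_lo, bwdC_lo]
      exact sing_ne (by simpa using (fun h => hz (by linear_combination h)))
    · rw [fwdC_hi, bwdC_hi]
      exact cycE_ne hn (fun h => hz1 (by linear_combination h))
  -- p = fwdL m
  · rw [invF_fwdL hn v hm, invF_l0]
    exact compat_symm (compat_aP_bwdC hn v (by
      intro h
      exact cast_succ_ne_zero hn hm (by linear_combination h.symm)))
  · rw [invF_fwdL hn v hm, invF_l1]
    exact compat_symm (compat_bP hn v _ (Or.inl ⟨_, rfl⟩))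
  · -- fwdL m, bwdL m'
    have hmm1 : m' ≠ m + 1 := by
      intro h
      apply hc.1
      rw [fwdL_lo hn hm, bwdL_lo hn hm', h]
    have hmm : m ≠ m' := by
      intro h
      apply hc.2.2.2
      rw [fwdL_hi hn hm, bwdL_hi hn hm', h]
    have hz : (m : ZMod n) ≠ (m' : ZMod n) := fun h => hmm (natc_inj hn (by omega) (by omega) h)
    have hz1 : (m' : ZMod n) ≠ (m : ZMod n) + 1 := by
      intro h
      apply hmm1
      apply natc_inj hn (by omega) (by omega)
      push_cast
      linear_combination h
    rw [invF_fwdL hn v hm, invF_bwdL hn v hm']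
    refine (compat_iff_lo_hi (K_lo_card hn v _) (K_lo_card hn v _)).mpr ⟨?_, ?_⟩
    · rw [fwdC_lo, bwdC_lo]
      exact sing_ne (by simpa using (fun h => hz (by linear_combination h)))
    · rw [fwdC_hi, bwdC_hi]
      exact cycE_ne hn (fun h => hz1 (by linear_combination -h))
  · -- fwdL m, fwdL m'
    have hmm : m ≠ m' := by
      intro h
      apply hc.2.2.2
      rw [fwdL_hi hn hm, fwdL_hi hn hm', h]
    have hz : (m : ZMod n) ≠ (m' : ZMod n) := fun h => hmm (natc_inj hn (by omega) (by omega) h)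
    rw [invF_fwdL hn v hm, invF_fwdL hn v hm']
    refine (compat_iff_lo_hi (K_lo_card hn v _) (K_lo_card hn v _)).mpr ⟨?_, ?_⟩
    · rw [bwdC_lo, bwdC_lo]
      exact sing_ne (by simpa using (fun h => hz (by linear_combination h)))
    · rw [bwdC_hi, bwdC_hi]
      exact cycE_ne hn (fun h => hz (by linear_combination h))

lemma invF_ne_p1 (hn : 3 ≤ n) (v : ZMod n) (q : VPair (LL n)) :
    invF hn v q ≠ bwdC hn v v := by
  haveI : NeZero n := ⟨by omega⟩
  rcases L_pair_classify hn q with rfl | rfl | ⟨m, hm, rfl | rfl⟩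
  · rw [invF_l0]; exact aP_ne_bwdC hn v v
  · rw [invF_l1]; exact bP_ne_bwdC hn v v
  · rw [invF_bwdL hn v hm]
    exact fun h => bwdC_ne_fwdC hn v v (v + m) h.symm
  · rw [invF_fwdL hn v hm]
    intro h
    have h' := bwdC_inj hn h
    exact cast_succ_ne_zero hn hm (by linear_combination h')

lemma invF_ne_p2 (hn : 3 ≤ n) (v : ZMod n) (q : VPair (LL n)) :
    invF hn v q ≠ fwdC hn v (v - 1) := by
  haveI : NeZero n := ⟨by omega⟩
  rcases L_pair_classify hn q with rfl | rfl | ⟨m, hm, rfl | rfl⟩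
  · rw [invF_l0]; exact aP_ne_fwdC hn v (v-1)
  · rw [invF_l1]; exact bP_ne_fwdC hn v (v-1)
  · rw [invF_bwdL hn v hm]
    intro h
    have h' := fwdC_inj hn h
    have hc : ((m : ℕ) : ZMod n) = (((n - 1 : ℕ)) : ZMod n) := by
      push_cast [Nat.cast_sub (by omega : 1 ≤ n)]
      simp only [ZMod.natCast_self]
      linear_combination h'
    have := natc_inj hn (by omega) (by omega) hc
    omega
  · rw [invF_fwdL hn v hm]
    exact bwdC_ne_fwdC hn v _ _

lemma mem_fimage {V W : Type*} {f : V → W} {s : Finset V} {y : W} :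
    y ∈ fimage f s ↔ ∃ x ∈ s, f x = y := by
  classical
  unfold fimage
  exact Finset.mem_image

lemma fimage_nonempty {V W : Type*} {f : V → W} {s : Finset V} (h : s.Nonempty) :
    (fimage f s).Nonempty := by
  obtain ⟨x, hx⟩ := h
  exact ⟨f x, mem_fimage.2 ⟨x, hx, rfl⟩⟩

end Stmt11Aux

theorem stmt_11' (n : ℕ) (hn : 3 ≤ n) (v : ZMod n) :
    ∃ G, SCTo (MorseComplex (attachLeaf (graphComplex (cycleGraph n)) v)).faces G ∧
      Nonempty (ComplexIso G
        (MorseComplex (sDisjUnion (graphComplex (SimpleGraph.pathGraph n))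
          (graphComplex (SimpleGraph.pathGraph 2)))).faces) := by
  refine ⟨fun σ => ((MorseComplex (KK n v)).faces σ ∧ bwdC hn v v ∉ σ) ∧
      fwdC hn v (v-1) ∉ σ, collapse hn v, ⟨?_⟩⟩
  refine ⟨toF hn v, invF hn v, ?_, ?_, ?_, ?_⟩
  · -- left inverse
    intro x hx
    have hx1 : x ≠ bwdC hn v v := fun h => hx.1.2 (h ▸ Finset.mem_singleton_self x)
    have hx2 : x ≠ fwdC hn v (v-1) := fun h => hx.2 (h ▸ Finset.mem_singleton_self x)
    rcases K_pair_classify hn v x with rfl | rfl | ⟨t, rfl | rfl⟩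
    · rw [toF_aP, invF_l0]
    · rw [toF_bP, invF_l1]
    · exact left_inv_bwdC hn v (fun h => hx1 (by rw [h]))
    · exact left_inv_fwdC hn v (fun h => hx2 (by rw [h]))
  · -- right inverse
    intro y _
    rcases L_pair_classify hn y with rfl | rfl | ⟨m, hm, rfl | rfl⟩
    · rw [invF_l0, toF_aP]
    · rw [invF_l1, toF_bP]
    · exact right_inv_bwdL hn v hm
    · exact right_inv_fwdL hn v hm
  · -- map_face
    intro σ hσ
    obtain ⟨hne, hdvf, hq1, hq2⟩ := (G_iff hn v σ).1 hσ
    refine (L_morse_iff hn _).2 ⟨fimage_nonempty hne, ?_⟩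
    intro p' hp' q' hq' hne'
    simp only [Set.mem_setOf_eq] at hp' hq'
    obtain ⟨p, hp, rfl⟩ := mem_fimage.1 hp'
    obtain ⟨q, hq, rfl⟩ := mem_fimage.1 hq'
    have hpq : p ≠ q := fun h => hne' (by rw [h])
    exact toF_compat hn v
      (fun h => hq2 (h ▸ hp)) (fun h => hq1 (h ▸ hp))
      (fun h => hq2 (h ▸ hq)) (fun h => hq1 (h ▸ hq))
      hpq (hdvf p hp q hq hpq)
  · -- inv_face
    intro τ hτ
    obtain ⟨hne, hdvf⟩ := (L_morse_iff hn τ).1 hτ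
    refine (G_iff hn v _).2 ⟨fimage_nonempty hne, ?_, ?_, ?_⟩
    · intro p' hp' q' hq' hne'
      simp only [Set.mem_setOf_eq] at hp' hq'
      obtain ⟨p, hp, rfl⟩ := mem_fimage.1 hp'
      obtain ⟨q, hq, rfl⟩ := mem_fimage.1 hq'
      have hpq : p ≠ q := fun h => hne' (by rw [h])
      exact invF_compat hn v hpq (hdvf p hp q hq hpq)
    · intro hmem
      obtain ⟨q, hq, heq⟩ := mem_fimage.1 hmem
      exact invF_ne_p1 hn v q heq
    · intro hmem
      obtain ⟨q, hq, heq⟩ := mem_fimage.1 hmem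
      exact invF_ne_p2 hn v q heq

/-- `M(C_n ∨_v ℓ)` strongly collapses to a complex isomorphic to
`M(P_{n-1} ⊔ ℓ)`. -/
theorem stmt_11 (n : ℕ) (hn : 3 ≤ n) (v : ZMod n) :
    ∃ G, SCTo (MorseComplex (attachLeaf (graphComplex (cycleGraph n)) v)).faces G ∧
      Nonempty (ComplexIso G
        (MorseComplex (sDisjUnion (graphComplex (SimpleGraph.pathGraph n))
          (graphComplex (SimpleGraph.pathGraph 2)))).faces) := by
  exact stmt_11' n hn v
end

section
/- Let X be a finite poset that decomposes as a disjoint union X = A ⊔ B. If the generalized Morse complex f(A) of A is strongly collapsible, then the generalized Morse complex f(X) is strongly collapsible. -/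
open Finset

/-! ### Auxiliary development for statement 17 -/

theorem HEdge.ext' {Q : Type*} [PartialOrder Q] {p q : HEdge Q}
    (h1 : p.lo = q.lo) (h2 : p.hi = q.hi) : p = q := by
  cases p; cases q; cases h1; cases h2; rfl

theorem HEdge.Compat.symm' {Q : Type*} [PartialOrder Q] {p q : HEdge Q}
    (h : p.Compat q) : q.Compat p :=
  ⟨h.1.symm, h.2.2.1.symm, h.2.1.symm, h.2.2.2.symm⟩

theorem singleton_face {Q : Type*} [PartialOrder Q] (p : HEdge Q) :
    (genMorse Q).faces {p} := by
  refine ⟨Finset.singleton_nonempty p, ?_, ?_⟩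
  · intro a ha b hb hab
    simp only [Finset.mem_singleton] at ha hb
    subst ha; subst hb; exact absurd rfl hab
  · rintro ⟨k, hk, c, hc, hp⟩
    have h1 : c 1 = p := by have := hc 1; simpa using this
    have h2 : c 0 = p := by have := hc 0; simpa using this
    exact (hp 0).2 (by rw [show (0 : ZMod k) + 1 = 1 by ring, h1, h2])

theorem SCAux_congr {V : Type*} {F G : Finset V → Prop} (h : ∀ σ, F σ ↔ G σ)
    (hF : SCAux F) : SCAux G := by
  have : F = G := funext fun σ => propext (h σ)
  exact this ▸ hF

noncomputable instance {Q : Type*} [PartialOrder Q] [Fintype Q] : Fintype (HEdge Q) := by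
  classical
  exact Fintype.ofInjective (fun p : HEdge Q => (p.lo, p.hi))
    (fun p q h => HEdge.ext' (congrArg Prod.fst h) (congrArg Prod.snd h))

section Split

variable {P : Type*} [PartialOrder P] {s : Set P}
  (hsplit : ∀ a b : P, a ≤ b → (a ∈ s ↔ b ∈ s))

include hsplit

theorem cov_lift {a b : {x : P // x ∈ s}} (h : a ⋖ b) : (a : P) ⋖ (b : P) := by
  refine ⟨by exact_mod_cast h.1, fun z hz1 hz2 => ?_⟩
  have hzs : z ∈ s := (hsplit a z hz1.le).mp a.2
  exact h.2 (c := ⟨z, hzs⟩) (by exact_mod_cast hz1) (by exact_mod_cast hz2)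

omit hsplit in
theorem cov_restrict {a b : P} (ha : a ∈ s) (hb : b ∈ s) (h : a ⋖ b) :
    (⟨a, ha⟩ : {x : P // x ∈ s}) ⋖ ⟨b, hb⟩ := by
  refine ⟨by exact_mod_cast h.1, fun z hz1 hz2 => ?_⟩
  exact h.2 (c := (z : P)) (by exact_mod_cast hz1) (by exact_mod_cast hz2)

/-- Lift a Hasse edge of the subposet to a Hasse edge of `P`. -/
def eEdge (t : HEdge {x : P // x ∈ s}) : HEdge P :=
  ⟨t.lo, t.hi, cov_lift hsplit t.cov⟩

theorem eEdge_inj : Function.Injective (eEdge hsplit) := by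
  intro t1 t2 h
  exact HEdge.ext' (Subtype.coe_injective (congrArg HEdge.lo h))
    (Subtype.coe_injective (congrArg HEdge.hi h))

theorem eEdge_lo_mem (t : HEdge {x : P // x ∈ s}) : (eEdge hsplit t).lo ∈ s := t.lo.2

theorem hi_mem {q : HEdge P} (h : q.lo ∈ s) : q.hi ∈ s :=
  (hsplit q.lo q.hi q.cov.le).mp h

/-- Restrict a Hasse edge of `P` with endpoints in `s` to the subposet. -/
def rEdge (q : HEdge P) (h : q.lo ∈ s) : HEdge {x : P // x ∈ s} :=
  ⟨⟨q.lo, h⟩, ⟨q.hi, hi_mem hsplit h⟩, cov_restrict h (hi_mem hsplit h) q.cov⟩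

theorem eEdge_rEdge (q : HEdge P) (h : q.lo ∈ s) : eEdge hsplit (rEdge hsplit q h) = q :=
  HEdge.ext' rfl rfl

theorem compat_mixed {p q : HEdge P} (hp : p.lo ∈ s) (hq : q.lo ∉ s) : p.Compat q := by
  have hp' : p.hi ∈ s := hi_mem hsplit hp
  have hq' : q.hi ∉ s := fun h => hq ((hsplit q.lo q.hi q.cov.le).mpr h)
  exact ⟨fun h => hq (h ▸ hp), fun h => hq' (h ▸ hp), fun h => hq (h ▸ hp'),
    fun h => hq' (h ▸ hp')⟩

theorem cycle_const {k : ℕ} (hk : 0 < k) (c : ZMod k → HEdge P)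
    (hstep : ∀ i, (c (i + 1)).lo ⋖ (c i).hi) (i j : ZMod k) :
    (c i).lo ∈ s ↔ (c j).lo ∈ s := by
  have : NeZero k := ⟨hk.ne'⟩
  have key : ∀ i : ZMod k, ((c (i + 1)).lo ∈ s ↔ (c i).lo ∈ s) := fun i =>
    (hsplit _ _ (hstep i).le).trans (hsplit _ _ (c i).cov.le).symm
  have main : ∀ n : ℕ, ∀ i : ZMod k, ((c (i + n)).lo ∈ s ↔ (c i).lo ∈ s) := by
    intro n
    induction n with
    | zero => simp
    | succ m ih =>
      intro i
      have : ((m + 1 : ℕ) : ZMod k) = (m : ZMod k) + 1 := by push_cast; ring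
      rw [this, ← add_assoc]
      exact (key (i + m)).trans (ih i)
  have hj : j = i + ((j - i).val : ℕ) := by
    rw [ZMod.natCast_val, ZMod.cast_id]; ring
  rw [hj] at *
  exact (main _ i).symm

theorem face_restrict {σ : Finset (HEdge P)} (hσ : (genMorse P).faces σ)
    {σA : Finset (HEdge {x : P // x ∈ s})} (hmem : ∀ t, t ∈ σA ↔ eEdge hsplit t ∈ σ)
    (hne : σA.Nonempty) : (genMorse {x : P // x ∈ s}).faces σA := by
  obtain ⟨-, hcompat, hcyc⟩ := hσ
  refine ⟨hne, ?_, ?_⟩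
  · intro t1 h1 t2 h2 h12
    have hc := hcompat _ ((hmem t1).1 h1) _ ((hmem t2).1 h2)
      (fun h => h12 (eEdge_inj hsplit h))
    exact ⟨fun h => hc.1 (congrArg Subtype.val h), fun h => hc.2.1 (congrArg Subtype.val h),
      fun h => hc.2.2.1 (congrArg Subtype.val h), fun h => hc.2.2.2 (congrArg Subtype.val h)⟩
  · rintro ⟨k, hk, c, hc, hp⟩
    refine hcyc ⟨k, hk, fun i => eEdge hsplit (c i), fun i => (hmem (c i)).1 (hc i), fun i => ?_⟩
    exact ⟨cov_lift hsplit (hp i).1, fun h => (hp i).2 (Subtype.coe_injective h)⟩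

theorem face_union {σ : Finset (HEdge P)} (hσ : (genMorse P).faces σ)
    {τA : Finset (HEdge {x : P // x ∈ s})} (hτ : (genMorse {x : P // x ∈ s}).faces τA)
    (hcover : ∀ q ∈ σ, q.lo ∈ s → q ∈ τA.image (eEdge hsplit)) :
    (genMorse P).faces (σ ∪ τA.image (eEdge hsplit)) := by
  obtain ⟨hne, hcompat, hcyc⟩ := hσ
  obtain ⟨-, hcompatA, hcycA⟩ := hτ
  have himg : ∀ {q : HEdge P}, q ∈ τA.image (eEdge hsplit) →
      ∃ t ∈ τA, eEdge hsplit t = q := fun hq => Finset.mem_image.1 hq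
  have hliftC : ∀ {t1 t2 : HEdge {x : P // x ∈ s}}, t1.Compat t2 →
      (eEdge hsplit t1).Compat (eEdge hsplit t2) := by
    intro t1 t2 h
    exact ⟨fun he => h.1 (Subtype.coe_injective he), fun he => h.2.1 (Subtype.coe_injective he),
      fun he => h.2.2.1 (Subtype.coe_injective he), fun he => h.2.2.2 (Subtype.coe_injective he)⟩
  refine ⟨hne.mono Finset.subset_union_left, ?_, ?_⟩
  · intro p hp q hq hpq
    rcases Finset.mem_union.1 hp with hp' | hp' <;> rcases Finset.mem_union.1 hq with hq' | hq'
    · exact hcompat p hp' q hq' hpq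
    · obtain ⟨t2, ht2, rfl⟩ := himg hq'
      by_cases hps : p.lo ∈ s
      · obtain ⟨t1, ht1, rfl⟩ := himg (hcover p hp' hps)
        exact hliftC (hcompatA t1 ht1 t2 ht2 (fun h => hpq (congrArg _ h)))
      · exact (compat_mixed hsplit (eEdge_lo_mem hsplit t2) hps).symm'
    · obtain ⟨t1, ht1, rfl⟩ := himg hp'
      by_cases hqs : q.lo ∈ s
      · obtain ⟨t2, ht2, rfl⟩ := himg (hcover q hq' hqs)
        exact hliftC (hcompatA t1 ht1 t2 ht2 (fun h => hpq (congrArg _ h)))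
      · exact compat_mixed hsplit (eEdge_lo_mem hsplit t1) hqs
    · obtain ⟨t1, ht1, rfl⟩ := himg hp'
      obtain ⟨t2, ht2, rfl⟩ := himg hq'
      exact hliftC (hcompatA t1 ht1 t2 ht2 (fun h => hpq (congrArg _ h)))
  · rintro ⟨k, hk, c, hc, hp⟩
    have hc' : ∀ i, c i ∈ σ ∪ τA.image (eEdge hsplit) := hc
    by_cases h0 : (c 0).lo ∈ s
    · have hall : ∀ i, (c i).lo ∈ s := fun i =>
        (cycle_const hsplit hk c (fun i => (hp i).1) i 0).mpr h0
      have hmemA : ∀ i, rEdge hsplit (c i) (hall i) ∈ τA := by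
        intro i
        have hi : c i ∈ τA.image (eEdge hsplit) := by
          rcases Finset.mem_union.1 (hc' i) with h | h
          · exact hcover _ h (hall i)
          · exact h
        obtain ⟨t, ht, hte⟩ := himg hi
        have : t = rEdge hsplit (c i) (hall i) :=
          eEdge_inj hsplit (by rw [hte, eEdge_rEdge])
        exact this ▸ ht
      refine hcycA ⟨k, hk, fun i => rEdge hsplit (c i) (hall i), hmemA, fun i => ?_⟩
      exact ⟨cov_restrict _ _ (hp i).1, fun h => (hp i).2 (congrArg Subtype.val h)⟩
    · have hall : ∀ i, (c i).lo ∉ s := fun i h =>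
        h0 ((cycle_const hsplit hk c (fun i => (hp i).1) 0 i).mpr h)
      have hcσ : ∀ i, c i ∈ σ := by
        intro i
        rcases Finset.mem_union.1 (hc' i) with h | h
        · exact h
        · obtain ⟨t, ht, hte⟩ := himg h
          exact absurd (hte ▸ eEdge_lo_mem hsplit t) (hall i)
      exact hcyc ⟨k, hk, c, hcσ, hp⟩

theorem coneSC (v : HEdge {x : P // x ∈ s}) (R : Finset (HEdge P))
    (hR : ∀ q ∈ R, q.lo ∉ s) :
    SCAux (fun σ : Finset (HEdge P) => (genMorse P).faces σ ∧
      (∀ t, t ≠ v → eEdge hsplit t ∉ σ) ∧ ∀ q, q.lo ∉ s → q ∉ R → q ∉ σ) := by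
  induction R using Finset.induction_on with
  | empty =>
    apply SCAux.point _ (eEdge hsplit v)
    intro σ
    constructor
    · rintro ⟨⟨hne, -, -⟩, h2, h3⟩
      have hsub : σ ⊆ {eEdge hsplit v} := by
        intro q hq
        by_cases hqs : q.lo ∈ s
        · by_cases hv : rEdge hsplit q hqs = v
          · have : q = eEdge hsplit v := by rw [← eEdge_rEdge hsplit q hqs, hv]
            exact Finset.mem_singleton.2 this
          · exact absurd hq ((eEdge_rEdge hsplit q hqs) ▸ h2 _ hv)
        · exact absurd hq (h3 q hqs (Finset.notMem_empty q))
      rcases Finset.subset_singleton_iff.1 hsub with h | h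
      · exact absurd h hne.ne_empty
      · exact h
    · rintro rfl
      refine ⟨singleton_face _, ?_, ?_⟩
      · intro t ht hmem
        exact ht (eEdge_inj hsplit (Finset.mem_singleton.1 hmem))
      · intro q hqs _ hmem
        exact hqs (Finset.mem_singleton.1 hmem ▸ eEdge_lo_mem hsplit v)
  | @insert q0 R' hq0 ih =>
    have hq0s : q0.lo ∉ s := hR q0 (Finset.mem_insert_self q0 R')
    have hR' : ∀ q ∈ R', q.lo ∉ s := fun q hq => hR q (Finset.mem_insert_of_mem hq)
    refine SCAux.step _ (eEdge hsplit v) q0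
      (fun h => hq0s (h ▸ eEdge_lo_mem hsplit v)) ?_ ?_ ?_ ?_
    · refine ⟨singleton_face _, ?_, ?_⟩
      · intro t ht hmem
        exact ht (eEdge_inj hsplit (Finset.mem_singleton.1 hmem))
      · intro q hqs _ hmem
        exact hqs (Finset.mem_singleton.1 hmem ▸ eEdge_lo_mem hsplit v)
    · refine ⟨singleton_face _, ?_, ?_⟩
      · intro t _ hmem
        exact hq0s ((Finset.mem_singleton.1 hmem) ▸ eEdge_lo_mem hsplit t)
      · intro q _ hq hmem
        exact hq ((Finset.mem_singleton.1 hmem) ▸ Finset.mem_insert_self q0 R')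
    · rintro σ ⟨⟨hgm, h2, h3⟩, hmax⟩ hq0σ
      have key : ∀ p ∈ σ, p ≠ eEdge hsplit v → p.lo ∉ s := by
        intro p hp hpv hps
        by_cases hv : rEdge hsplit p hps = v
        · exact hpv (by rw [← eEdge_rEdge hsplit p hps, hv])
        · exact ((eEdge_rEdge hsplit p hps) ▸ h2 _ hv) hp
      have hF' : (genMorse P).faces (insert (eEdge hsplit v) σ) ∧
          (∀ t, t ≠ v → eEdge hsplit t ∉ insert (eEdge hsplit v) σ) ∧
          ∀ q, q.lo ∉ s → q ∉ insert q0 R' → q ∉ insert (eEdge hsplit v) σ := by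
        refine ⟨⟨Finset.insert_nonempty _ _, ?_, ?_⟩, ?_, ?_⟩
        · intro p hp q hq hpq
          rcases Finset.mem_insert.1 hp with hp' | hp' <;>
            rcases Finset.mem_insert.1 hq with hq' | hq'
          · exact absurd (hp'.trans hq'.symm) hpq
          · subst hp'
            exact compat_mixed hsplit (eEdge_lo_mem hsplit v)
              (key q hq' (fun h => hpq h.symm))
          · subst hq'
            exact (compat_mixed hsplit (eEdge_lo_mem hsplit v) (key p hp' hpq)).symm'
          · exact hgm.2.1 p hp' q hq' hpq
        · rintro ⟨k, hk, c, hc, hp⟩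
          by_cases h0 : (c 0).lo ∈ s
          · have hall : ∀ i, (c i).lo ∈ s := fun i =>
              (cycle_const hsplit hk c (fun i => (hp i).1) i 0).mpr h0
            have hcv : ∀ i, c i = eEdge hsplit v := by
              intro i
              rcases Finset.mem_insert.1 (hc i) with h | h
              · exact h
              · by_contra hne'
                exact (key _ h hne') (hall i)
            exact (hp 0).2 (by rw [hcv, hcv])
          · have hall : ∀ i, (c i).lo ∉ s := fun i h =>
              h0 ((cycle_const hsplit hk c (fun i => (hp i).1) 0 i).mpr h)
            have hcσ : ∀ i, c i ∈ σ := by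
              intro i
              rcases Finset.mem_insert.1 (hc i) with h | h
              · exact absurd (h ▸ eEdge_lo_mem hsplit v) (hall i)
              · exact h
            exact hgm.2.2 ⟨k, hk, c, hcσ, hp⟩
        · intro t ht hmem
          rcases Finset.mem_insert.1 hmem with h | h
          · exact ht (eEdge_inj hsplit h)
          · exact h2 t ht h
        · intro q hqs hq hmem
          rcases Finset.mem_insert.1 hmem with h | h
          · exact hqs (h ▸ eEdge_lo_mem hsplit v)
          · exact h3 q hqs hq h
      have heq := hmax _ hF' (Finset.subset_insert _ _)
      rw [heq]
      exact Finset.mem_insert_self _ _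
    · refine SCAux_congr ?_ (ih hR')
      intro σ
      constructor
      · rintro ⟨h1, h2, h3⟩
        exact ⟨⟨h1, h2, fun q hqs hq => h3 q hqs (fun h => hq (Finset.mem_insert_of_mem h))⟩,
          h3 q0 hq0s hq0⟩
      · rintro ⟨⟨h1, h2, h3⟩, h4⟩
        refine ⟨h1, h2, fun q hqs hq => ?_⟩
        by_cases hqq : q = q0
        · exact hqq ▸ h4
        · exact h3 q hqs (fun h => (Finset.mem_insert.1 h).elim hqq hq)

theorem mainLemma [Fintype P] {F : Finset (HEdge {x : P // x ∈ s}) → Prop} (hF : SCAux F) :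
    (∀ σ, F σ ↔ (genMorse {x : P // x ∈ s}).faces σ ∧ ∀ t, ¬ F {t} → t ∉ σ) →
    SCAux (fun σ : Finset (HEdge P) =>
      (genMorse P).faces σ ∧ ∀ t, ¬ F {t} → eEdge hsplit t ∉ σ) := by
  induction hF with
  | point F v hv =>
    intro _
    have hFt : ∀ t, F {t} ↔ t = v := fun t => (hv {t}).trans Finset.singleton_inj
    classical
    refine SCAux_congr ?_ (coneSC hsplit v
      (Finset.univ.filter (fun q : HEdge P => q.lo ∉ s))
      (fun q hq => (Finset.mem_filter.1 hq).2))
    intro σ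
    constructor
    · rintro ⟨h1, h2, -⟩
      exact ⟨h1, fun t ht => h2 t (fun heq => ht ((hFt t).2 heq))⟩
    · rintro ⟨h1, h2⟩
      refine ⟨h1, fun t htne => h2 t (fun hf => htne ((hFt t).1 hf)), fun q hqs hq => ?_⟩
      exact absurd (Finset.mem_filter.2 ⟨Finset.mem_univ q, hqs⟩) hq
  | step F w w' hne hw hw' hdom hstep ih =>
    intro hinv
    have hinv' : ∀ σ, (F σ ∧ w' ∉ σ) ↔ (genMorse {x : P // x ∈ s}).faces σ ∧
        ∀ t, ¬ (F {t} ∧ w' ∉ ({t} : Finset _)) → t ∉ σ := by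
      intro σ
      constructor
      · rintro ⟨hFσ, hw'σ⟩
        obtain ⟨hg, hrem⟩ := (hinv σ).1 hFσ
        refine ⟨hg, fun t ht htσ => ?_⟩
        by_cases htw : t = w'
        · exact hw'σ (htw ▸ htσ)
        · exact hrem t (fun hf => ht ⟨hf, fun h => htw (Finset.mem_singleton.1 h).symm⟩) htσ
      · rintro ⟨hg, hrem⟩
        exact ⟨(hinv σ).2 ⟨hg, fun t ht => hrem t (fun hc => ht hc.1)⟩,
          hrem w' (fun hc => hc.2 (Finset.mem_singleton_self w'))⟩
    have ihs := ih hinv'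
    refine SCAux.step _ (eEdge hsplit w) (eEdge hsplit w')
      (fun h => hne (eEdge_inj hsplit h)) ?_ ?_ ?_ ?_
    · refine ⟨singleton_face _, fun t ht hmem => ?_⟩
      have := eEdge_inj hsplit (Finset.mem_singleton.1 hmem)
      exact ht (this ▸ hw)
    · refine ⟨singleton_face _, fun t ht hmem => ?_⟩
      have := eEdge_inj hsplit (Finset.mem_singleton.1 hmem)
      exact ht (this ▸ hw')
    · rintro σ ⟨⟨hgσ, hrem⟩, hmax⟩ hw'σ
      classical
      set σA := σ.preimage (eEdge hsplit) ((eEdge_inj hsplit).injOn) with hσAdef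
      have hmemA : ∀ t, t ∈ σA ↔ eEdge hsplit t ∈ σ := fun t => Finset.mem_preimage
      have hw'A : w' ∈ σA := (hmemA w').2 hw'σ
      have hFσA : F σA := (hinv σA).2 ⟨face_restrict hsplit hgσ hmemA ⟨w', hw'A⟩,
        fun t ht htA => hrem t ht ((hmemA t).1 htA)⟩
      have hmaxA : ∀ τA, F τA → σA ⊆ τA → σA = τA := by
        intro τA hFτ hsub
        obtain ⟨hgτ, hremτ⟩ := (hinv τA).1 hFτ
        have hFt : ∀ t ∈ τA, F {t} := fun t ht => by
          by_contra hc; exact hremτ t hc ht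
        have hcover : ∀ q ∈ σ, q.lo ∈ s → q ∈ τA.image (eEdge hsplit) := by
          intro q hq hqs
          refine Finset.mem_image.2 ⟨rEdge hsplit q hqs,
            hsub ((hmemA _).2 ?_), eEdge_rEdge hsplit q hqs⟩
          rw [eEdge_rEdge hsplit q hqs]; exact hq
        have hGσ' : (genMorse P).faces (σ ∪ τA.image (eEdge hsplit)) ∧
            ∀ t, ¬ F {t} → eEdge hsplit t ∉ σ ∪ τA.image (eEdge hsplit) := by
          refine ⟨face_union hsplit hgσ hgτ hcover, ?_⟩
          intro t ht hmem
          rcases Finset.mem_union.1 hmem with h | h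
          · exact hrem t ht h
          · obtain ⟨t', ht', heq⟩ := Finset.mem_image.1 h
            exact ht ((eEdge_inj hsplit heq) ▸ hFt t' ht')
        have heq := hmax _ hGσ' Finset.subset_union_left
        refine Finset.Subset.antisymm hsub (fun t ht => (hmemA t).2 ?_)
        rw [heq]
        exact Finset.mem_union_right _ (Finset.mem_image_of_mem _ ht)
      exact (hmemA w).1 (hdom σA ⟨hFσA, hmaxA⟩ hw'A)
    · refine SCAux_congr ?_ ihs
      intro σ
      constructor
      · rintro ⟨h1, h2⟩
        exact ⟨⟨h1, fun t ht => h2 t (fun hc => ht hc.1)⟩,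
          h2 w' (fun hc => hc.2 (Finset.mem_singleton_self w'))⟩
      · rintro ⟨⟨h1, h2⟩, h3⟩
        refine ⟨h1, fun t ht => ?_⟩
        by_cases htw : t = w'
        · exact htw ▸ h3
        · exact h2 t (fun hf => ht ⟨hf, fun h => htw (Finset.mem_singleton.1 h).symm⟩)

end Split

/-- if a finite poset `X` decomposes as a disjoint union `A ⊔ B`
and `f(A)` is strongly collapsible, then `f(X)` is strongly collapsible. -/
theorem stmt_17 {P : Type*} [PartialOrder P] [Fintype P] (s : Set P)
    (hsplit : ∀ a b : P, a ≤ b → (a ∈ s ↔ b ∈ s))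
    (h : StronglyCollapsible (genMorse {x : P // x ∈ s})) :
    StronglyCollapsible (genMorse P) := by
  have hinv0 : ∀ σ, (genMorse {x : P // x ∈ s}).faces σ ↔
      (genMorse {x : P // x ∈ s}).faces σ ∧
      ∀ t, ¬ (genMorse {x : P // x ∈ s}).faces {t} → t ∉ σ :=
    fun σ => ⟨fun hσ => ⟨hσ, fun t ht => absurd (singleton_face t) ht⟩, fun h' => h'.1⟩
  refine SCAux_congr ?_ (mainLemma hsplit h hinv0)
  intro σ
  exact ⟨fun h' => h'.1, fun h' => ⟨h', fun t ht => absurd (singleton_face t) ht⟩⟩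
end
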